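/- arXiv:1011.1622 — 2 statements merged into one kernel-verified Lean document; each statement's English description precedes it below -/
import Mathlib

section
/- Let n ≥ 2 and δ ≥ (n−1)/2, and let φ^δ : ℝⁿ → ℂ be the Bochner-Riesz kernel, i.e. the Fourier transform of ξ ↦ (1−|ξ|²)_+^δ. Then there exists a constant C > 0 such that for all x ∈ ℝⁿ, |φ^δ(x)| ≤ C·(1+|x|)^{−((n+1)/2+δ)}. -/
open MeasureTheory Metric ENNReal

noncomputable section

/-- `ℝⁿ` as a Euclidean space. -/
abbrev Rn (n : ℕ) := EuclideanSpace ℝ (Fin n)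

/-- A weight on `ℝⁿ`: a locally integrable function which is positive almost everywhere. -/
def IsWeight {n : ℕ} (w : Rn n → ℝ) : Prop :=
  LocallyIntegrable w volume ∧ ∀ᵐ x : Rn n ∂volume, 0 < w x

/-- The weighted measure `w(E) = ∫_E w(x) dx` of a set. -/
def wMeasure {n : ℕ} (w : Rn n → ℝ) (s : Set (Rn n)) : ℝ≥0∞ :=
  ∫⁻ x in s, ENNReal.ofReal (w x)

/-- The Muckenhoupt class `A_p`, `1 < p < ∞`. -/
def IsAp {n : ℕ} (p : ℝ) (w : Rn n → ℝ) : Prop :=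
  IsWeight w ∧ ∃ C : ℝ, ∀ (x₀ : Rn n) (r : ℝ), 0 < r →
    ((volume (ball x₀ r)).toReal⁻¹ * ∫ x in ball x₀ r, w x) *
      ((volume (ball x₀ r)).toReal⁻¹ * ∫ x in ball x₀ r, (w x) ^ (-(1 / (p - 1)))) ^ (p - 1) ≤ C

/-- The Muckenhoupt class `A_1`. -/
def IsA1 {n : ℕ} (w : Rn n → ℝ) : Prop :=
  IsWeight w ∧ ∃ C : ℝ, ∀ (x₀ : Rn n) (r : ℝ), 0 < r →
    (volume (ball x₀ r)).toReal⁻¹ * ∫ x in ball x₀ r, w x ≤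
      C * essInf w (volume.restrict (ball x₀ r))

/-- The reverse Hölder class `RH_r`, `r > 1`. -/
def IsRH {n : ℕ} (r : ℝ) (w : Rn n → ℝ) : Prop :=
  IsWeight w ∧ ∃ C : ℝ, ∀ (x₀ : Rn n) (ρ : ℝ), 0 < ρ →
    ((volume (ball x₀ ρ)).toReal⁻¹ * ∫ x in ball x₀ ρ, (w x) ^ r) ^ (1 / r) ≤
      C * ((volume (ball x₀ ρ)).toReal⁻¹ * ∫ x in ball x₀ ρ, w x)

/-- The weighted Morrey norm `‖f‖_{L^{p,κ}(w)}` (valued in `ℝ≥0∞`). -/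
def morreyNorm {n : ℕ} (p κ : ℝ) (w : Rn n → ℝ) (f : Rn n → ℝ) : ℝ≥0∞ :=
  ⨆ (x₀ : Rn n) (r : ℝ) (_ : 0 < r),
    ((∫⁻ x in ball x₀ r, ENNReal.ofReal (|f x| ^ p * w x)) /
      (wMeasure w (ball x₀ r)) ^ κ) ^ (1 / p)

/-- The average `b_B` of `b` over the ball `B(x₀, r)`. -/
def ballAvg {n : ℕ} (b : Rn n → ℝ) (x₀ : Rn n) (r : ℝ) : ℝ :=
  (volume (ball x₀ r)).toReal⁻¹ * ∫ x in ball x₀ r, b x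

/-- The BMO norm `‖b‖_*` (valued in `ℝ≥0∞`). -/
def bmoNorm {n : ℕ} (b : Rn n → ℝ) : ℝ≥0∞ :=
  ⨆ (x₀ : Rn n) (r : ℝ) (_ : 0 < r),
    (volume (ball x₀ r))⁻¹ * ∫⁻ x in ball x₀ r, ENNReal.ofReal |b x - ballAvg b x₀ r|

/-- `b ∈ BMO(ℝⁿ)`. -/
def IsBMO {n : ℕ} (b : Rn n → ℝ) : Prop :=
  LocallyIntegrable b volume ∧ bmoNorm b < ⊤

/-- The Bochner–Riesz kernel `φ^δ`, the Fourier transform of `ξ ↦ (1 - |ξ|²)₊^δ`. -/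
def brKernel (n : ℕ) (δ : ℝ) : Rn n → ℂ :=
  VectorFourier.fourierIntegral Real.fourierChar volume (innerₗ (Rn n)) (fun ξ : Rn n => ((((1 - ‖ξ‖ ^ 2) ⊔ 0) ^ δ : ℝ) : ℂ))

/-- The Bochner–Riesz operator `T^δ_R f(x) = ∫ Rⁿ φ^δ(R(x - y)) f(y) dy`. -/
def brOp {n : ℕ} (δ R : ℝ) (f : Rn n → ℝ) (x : Rn n) : ℂ :=
  ∫ y : Rn n, (R : ℂ) ^ n * brKernel n δ (R • (x - y)) * (f y : ℂ)

/-- The maximal Bochner–Riesz operator `T^δ_* f(x) = sup_{R > 0} |T^δ_R f(x)|`. -/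
def brMax {n : ℕ} (δ : ℝ) (f : Rn n → ℝ) (x : Rn n) : ℝ :=
  ⨆ (R : ℝ) (_ : 0 < R), ‖brOp δ R f x‖

/-- The commutator `[b, T^δ_R] f(x) = b(x) T^δ_R f(x) - T^δ_R (b f)(x)`. -/
def brComm {n : ℕ} (δ R : ℝ) (b f : Rn n → ℝ) (x : Rn n) : ℂ :=
  (b x : ℂ) * brOp δ R f x - brOp δ R (fun y => b y * f y) x

namespace BRAux
open Complex Real Set Filter

/-- the profile function -/
def g (μ t : ℝ) : ℝ := ((1 - t^2) ⊔ 0) ^ μ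

/-- the 1-dimensional oscillatory integral -/
def oneD (μ lam : ℝ) : ℂ := ∫ t : ℝ, Complex.exp ((-2 * π * (t * lam) : ℝ) * I) * (g μ t : ℂ)

/-- holomorphic extension of the integrand -/
def Ef (μ lam : ℝ) (z : ℂ) : ℂ := Complex.exp (-(2*π*lam) * z * I) * (1 - z^2) ^ (μ:ℂ)

lemma g_nonneg (μ t : ℝ) : 0 ≤ g μ t := Real.rpow_nonneg le_sup_right _

lemma g_le_one {μ : ℝ} (hμ : 0 ≤ μ) (t : ℝ) : g μ t ≤ 1 := by
  apply Real.rpow_le_one le_sup_right _ hμ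
  have : (1:ℝ) - t^2 ≤ 1 := by nlinarith [sq_nonneg t]
  simp [this]

lemma g_eq_zero {μ t : ℝ} (hμ : 0 < μ) (ht : t ∉ Ioc (-1:ℝ) 1) : g μ t = 0 := by
  have h2 : (1:ℝ) - t^2 ≤ 0 := by
    simp only [mem_Ioc, not_and_or, not_lt, not_le] at ht
    rcases ht with h | h <;> nlinarith
  simp [g, sup_eq_right.2 h2, Real.zero_rpow hμ.ne']

lemma g_continuous (μ : ℝ) (hμ : 0 < μ) : Continuous (g μ) := by
  rw [continuous_iff_continuousAt]
  intro t
  exact (Real.continuousAt_rpow_const _ μ (Or.inr hμ.le)).comp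
    ((continuous_const.sub (continuous_pow 2)).sup continuous_const).continuousAt

lemma oneD_eq_setIntegral {μ : ℝ} (hμ : 0 < μ) (lam : ℝ) :
    oneD μ lam = ∫ t in Ioc (-1:ℝ) 1, Complex.exp ((-2 * π * (t * lam) : ℝ) * I) * (g μ t : ℂ) := by
  unfold oneD
  exact (setIntegral_eq_integral_of_forall_compl_eq_zero
    (f := fun t => Complex.exp ((-2 * π * (t * lam) : ℝ) * I) * (g μ t : ℂ))
    (fun t ht => by simp [g_eq_zero hμ ht])).symm

lemma oneD_norm_le_two {μ : ℝ} (hμ : 0 < μ) (lam : ℝ) : ‖oneD μ lam‖ ≤ 2 := by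
  rw [oneD_eq_setIntegral hμ]
  have := norm_setIntegral_le_of_norm_le_const (μ := volume) (s := Ioc (-1:ℝ) 1)
    (f := fun t => Complex.exp ((-2 * π * (t * lam) : ℝ) * I) * (g μ t : ℂ)) (C := 1)
    (by simp [Real.volume_Ioc]) ?_
  · calc _ ≤ 1 * (volume (Ioc (-1:ℝ) 1)).toReal := this
    _ ≤ 2 := by rw [Real.volume_Ioc]; norm_num
  · intro t _
    rw [norm_mul]
    have h1 : ‖Complex.exp ((-2 * π * (t * lam) : ℝ) * I)‖ = 1 := Complex.norm_exp_ofReal_mul_I _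
    have h2 : ‖(g μ t : ℂ)‖ ≤ 1 := by
      rw [Complex.norm_real, Real.norm_eq_abs, _root_.abs_of_nonneg (g_nonneg μ t)]
      exact g_le_one hμ.le t
    rw [h1, one_mul]; exact h2


lemma slit {z : ℂ} (h : z.im = 0 → |z.re| < 1) : 1 - z^2 ∈ Complex.slitPlane := by
  rw [Complex.mem_slitPlane_iff]
  have hre : (1 - z^2).re = 1 - (z.re^2 - z.im^2) := by
    simp [pow_two, Complex.mul_re]; try ring
  have him : (1 - z^2).im = -(2 * z.re * z.im) := by
    simp [pow_two, Complex.mul_im]; try ring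
  by_cases him0 : z.im = 0
  · left; rw [hre]; have := abs_lt.1 (h him0); nlinarith [this.1, this.2]
  · by_cases hre0 : z.re = 0
    · left; rw [hre, hre0]; nlinarith [sq_nonneg z.im, _root_.sq_abs z.im]
    · right; rw [him]; simp [hre0, him0]

lemma contAt {μ : ℝ} (hμ : 0 < μ) {z : ℂ} (h : z.im = 0 → -1 ≤ z.re ∧ z.re ≤ 1) :
    ContinuousAt (fun w : ℂ => (1 - w^2) ^ (μ:ℂ)) z := by
  have hbase : ContinuousAt (fun w : ℂ => 1 - w^2) z :=
    (continuousAt_const.sub (continuousAt_pow z 2))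
  by_cases h0 : 1 - z^2 = 0
  · have h1 : ContinuousAt (fun p : ℂ × ℂ => p.1 ^ p.2) (1 - z^2, (μ:ℂ)) := by
      rw [h0]; exact Complex.continuousAt_cpow_zero_of_re_pos (by simpa using hμ)
    exact ContinuousAt.comp (f := fun w : ℂ => (1 - w^2, (μ:ℂ))) h1 (hbase.prodMk continuousAt_const)
  · refine (continuousAt_cpow_const (b := (μ:ℂ)) ?_).comp hbase
    refine slit (fun him0 => ?_)
    have h2 := h him0
    rcases lt_or_eq_of_le (abs_le.2 h2 : |z.re| ≤ 1) with h3 | h3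
    · exact h3
    · exfalso
      apply h0
      have hz : z = (z.re : ℂ) := Complex.ext rfl (by simp [him0])
      have h4 : (1:ℝ) - z.re^2 = 0 := by
        rw [← _root_.sq_abs, h3]; ring
      rw [hz, show (1:ℂ) - (z.re:ℂ)^2 = ((1 - z.re^2 : ℝ) : ℂ) by push_cast; ring, h4]
      simp

lemma diffAt {μ lam : ℝ} {z : ℂ} (h : 1 - z^2 ∈ Complex.slitPlane) :
    DifferentiableAt ℂ (Ef μ lam) z := by
  have h1 : DifferentiableAt ℂ (fun z : ℂ => Complex.exp (-(2*π*lam) * z * I)) z := by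
    apply DifferentiableAt.cexp
    exact ((differentiableAt_const _).mul differentiableAt_id).mul (differentiableAt_const _)
  exact h1.mul (((differentiableAt_const _).sub (differentiableAt_pow 2)).cpow
    (differentiableAt_const _) h)

lemma oneD_eq_intervalIntegral {μ : ℝ} (hμ : 0 < μ) (lam : ℝ) :
    oneD μ lam = ∫ t in (-1:ℝ)..1, Ef μ lam t := by
  rw [oneD_eq_setIntegral hμ, intervalIntegral.integral_of_le (by norm_num : (-1:ℝ) ≤ 1)]
  refine setIntegral_congr_fun measurableSet_Ioc (fun t ht => ?_)
  have h1 : (0:ℝ) ≤ 1 - t^2 := by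
    rcases ht with ⟨h1, h2⟩; nlinarith
  unfold Ef
  rw [show (g μ t : ℂ) = (1 - (t:ℂ)^2) ^ (μ:ℂ) by
    rw [g, sup_eq_left.2 h1, Complex.ofReal_cpow h1]; push_cast; ring_nf]
  congr 1
  congr 1
  push_cast
  ring

lemma rect {μ lam : ℝ} (hμ : 0 < μ) {T : ℝ} (hT : 0 < T) :
    (∫ t in (-1:ℝ)..1, Ef μ lam t) =
      (∫ x in (-1:ℝ)..1, Ef μ lam (x + (-T) * I))
      + I • (∫ y in (-T:ℝ)..0, Ef μ lam (1 + y * I))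
      - I • (∫ y in (-T:ℝ)..0, Ef μ lam (-1 + y * I)) := by
  have hz : (Complex.mk (-1) (-T)).re = -1 := rfl
  have key := Complex.integral_boundary_rect_eq_zero_of_differentiable_on_off_countable
    (Ef μ lam) (Complex.mk (-1) (-T)) (Complex.mk 1 0) ∅ Set.countable_empty ?_ ?_
  · simp only [smul_eq_mul] at key ⊢
    push_cast at key ⊢
    have h0 : ∀ x : ℝ, Ef μ lam ((x:ℂ) + 0 * I) = Ef μ lam x := by
      intro x; norm_num
    rw [intervalIntegral.integral_congr (fun x _ => h0 x)] at key
    linear_combination -key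
  · -- continuity
    intro w hw
    rw [Complex.mem_reProdIm] at hw
    obtain ⟨hw1, hw2⟩ := hw
    simp only [uIcc_of_le (by norm_num : (-1:ℝ) ≤ 1),
      uIcc_of_le (by linarith : (-T:ℝ) ≤ 0)] at hw1 hw2
    apply ContinuousAt.continuousWithinAt
    have hexp : ContinuousAt (fun z : ℂ => Complex.exp (-(2*π*lam) * z * I)) w := by
      fun_prop
    exact hexp.mul (contAt hμ (fun _ => ⟨hw1.1, hw1.2⟩))
  · -- differentiability
    intro w hw
    simp only [Set.mem_diff, Set.mem_empty_iff_false, not_false_iff, and_true,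
      Complex.mem_reProdIm,
      min_eq_left (by norm_num : (-1:ℝ) ≤ 1), max_eq_right (by norm_num : (-1:ℝ) ≤ 1),
      min_eq_left (by linarith : (-T:ℝ) ≤ 0), max_eq_right (by linarith : (-T:ℝ) ≤ 0)] at hw
    exact diffAt (slit (fun him => absurd him (ne_of_lt hw.2.2)))

/-- dominating function for the side integrals -/
def maj2 (μ lam s : ℝ) : ℝ :=
  2^μ * (s^(2*μ) * Real.exp (-(2*π*lam*s))) + 2^μ*2^μ * (s^μ * Real.exp (-(2*π*lam*s)))

lemma add_rpow_le {a b μ : ℝ} (ha : 0 ≤ a) (hb : 0 ≤ b) (hμ : 0 ≤ μ) :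
    (a+b)^μ ≤ 2^μ * (a^μ + b^μ) := by
  have h1 : a + b ≤ 2 * (a ⊔ b) := by
    rcases le_total a b with h | h <;> simp [sup_eq_left.2, sup_eq_right.2, h] <;> linarith
  calc (a+b)^μ ≤ (2*(a⊔b))^μ := Real.rpow_le_rpow (by linarith) h1 hμ
  _ = 2^μ * (a⊔b)^μ := Real.mul_rpow (by norm_num) (le_trans ha le_sup_left)
  _ ≤ 2^μ * (a^μ + b^μ) := by
    apply mul_le_mul_of_nonneg_left _ (Real.rpow_nonneg (by norm_num) μ)
    rcases le_total a b with h | h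
    · rw [sup_eq_right.2 h]; nlinarith [Real.rpow_nonneg ha μ]
    · rw [sup_eq_left.2 h]; nlinarith [Real.rpow_nonneg hb μ]

lemma exp_rpow_integrable {ν c : ℝ} (hν : 0 ≤ ν) (hc : 0 < c) :
    IntegrableOn (fun s : ℝ => s^ν * Real.exp (-(c*s))) (Ioi (0:ℝ)) := by
  have h1 : IntegrableOn (fun x : ℝ => Real.exp (-x) * x ^ ((ν+1)-1)) (Ioi (0:ℝ)) :=
    Real.GammaIntegral_convergent (by linarith)
  simp only [add_sub_cancel_right] at h1
  have h2 := (integrableOn_Ioi_comp_mul_left_iff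
    (fun x : ℝ => Real.exp (-x) * x ^ ν) 0 hc).2 (by simpa using h1)
  norm_num at h2
  refine IntegrableOn.congr_fun (Integrable.const_mul h2 ((c^ν)⁻¹) : IntegrableOn _ _ _) (fun s hs => ?_)
    measurableSet_Ioi
  have hs0 : (0:ℝ) < s := hs
  rw [Real.mul_rpow hc.le hs0.le]
  field_simp [ne_of_gt (Real.rpow_pos_of_pos hc ν)]

lemma norm_Ef (μ lam : ℝ) (z : ℂ) :
    ‖Ef μ lam z‖ = Real.exp (2*π*lam*z.im) * ‖(1 - z^2)‖ ^ μ := by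
  rw [Ef, norm_mul, Complex.norm_exp,
    Complex.norm_cpow_real]
  congr 2
  simp [Complex.mul_re, Complex.mul_im]
  try ring

lemma norm_Ef_side_le {μ lam : ℝ} (hμ : 0 ≤ μ) {s : ℝ} (hs : 0 ≤ s) (ε : ℝ) (hε : ε = 1 ∨ ε = -1) :
    ‖Ef μ lam (ε - s*I)‖ ≤ Real.exp (-(2*π*lam*s)) * (s*(s+2))^μ := by
  rw [norm_Ef]
  have him : ((ε:ℂ) - s*I).im = -s := by
    rcases hε with h | h <;> simp [h]
  rw [him]
  have habs : ‖(1 - ((ε:ℂ) - s*I)^2)‖ ≤ s*(s+2) := by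
    have hε2 : (ε:ℂ)^2 = 1 := by rcases hε with h | h <;> norm_num [h]
    have hfact : 1 - ((ε:ℂ) - s*I)^2 = (s:ℂ) * ((s:ℂ) + (2*ε)*I) := by
      have he : ((ε:ℂ) - s*I)^2 = (ε:ℂ)^2 - 2*ε*s*I + (s:ℂ)^2*I^2 := by ring
      rw [he, hε2, Complex.I_sq]; push_cast; ring
    rw [hfact, norm_mul]
    have h1 : ‖(s:ℂ)‖ = s := by rw [Complex.norm_real, Real.norm_eq_abs, _root_.abs_of_nonneg hs]
    have h2 : ‖((s:ℂ) + (2*ε)*I)‖ ≤ s + 2 := by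
      refine le_trans (norm_add_le _ _) ?_
      have h3 : ‖(2 * (ε:ℂ) * I)‖ = 2 := by
        rcases hε with h | h <;> norm_num [h, norm_mul]
      rw [h1, h3]
    rw [h1]
    exact mul_le_mul_of_nonneg_left h2 hs
  have := Real.rpow_le_rpow (norm_nonneg _) habs hμ
  calc Real.exp (2*π*lam*(-s)) * ‖(1 - ((ε:ℂ) - s*I)^2)‖ ^ μ
      ≤ Real.exp (2*π*lam*(-s)) * (s*(s+2))^μ :=
        mul_le_mul_of_nonneg_left this (Real.exp_nonneg _)
  _ = Real.exp (-(2*π*lam*s)) * (s*(s+2))^μ := by ring_nf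

lemma side_le_maj2 {μ lam : ℝ} (hμ : 0 ≤ μ) {s : ℝ} (hs : 0 ≤ s) :
    Real.exp (-(2*π*lam*s)) * (s*(s+2))^μ ≤ maj2 μ lam s := by
  have h1 : (s*(s+2))^μ ≤ 2^μ * (s^(2*μ) + 2^μ * s^μ) := by
    have e1 : s*(s+2) = s^2 + 2*s := by ring
    rw [e1]
    refine le_trans (add_rpow_le (by positivity) (by positivity) hμ) ?_
    have e2 : (s^2:ℝ)^μ = s^(2*μ) := by
      rw [← Real.rpow_natCast s 2, ← Real.rpow_mul hs]
      norm_num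
    have e3 : ((2*s:ℝ))^μ = 2^μ * s^μ := Real.mul_rpow (by norm_num) hs
    rw [e2, e3]
  calc Real.exp (-(2*π*lam*s)) * (s*(s+2))^μ
      ≤ Real.exp (-(2*π*lam*s)) * (2^μ * (s^(2*μ) + 2^μ * s^μ)) :=
        mul_le_mul_of_nonneg_left h1 (Real.exp_nonneg _)
  _ = maj2 μ lam s := by rw [maj2]; ring

lemma maj2_integrable {μ lam : ℝ} (hμ : 0 ≤ μ) (hlam : 0 < lam) :
    IntegrableOn (maj2 μ lam) (Ioi (0:ℝ)) := by
  have hc : 0 < 2*π*lam := by positivity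
  exact ((exp_rpow_integrable (by linarith) hc).const_mul _).add
    ((exp_rpow_integrable hμ hc).const_mul _)

lemma norm_Ef_bottom_le {μ lam : ℝ} (hμ : 0 ≤ μ) {T x : ℝ} (hx : |x| ≤ 1) :
    ‖Ef μ lam (x + (-T) * I)‖ ≤ Real.exp (-(2*π*lam*T)) * (2+T^2)^μ := by
  rw [norm_Ef]
  have him : ((x:ℂ) + (-T)*I).im = -T := by simp
  rw [him]
  have habs : ‖(1 - ((x:ℂ) + (-T)*I)^2)‖ ≤ 2 + T^2 := by
    have h1 := norm_sub_le (1:ℂ) (((x:ℂ) + (-T)*I)^2)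
    simp only [norm_one] at h1
    have h2 : ‖(((x:ℂ) + (-T)*I)^2)‖ = x^2 + T^2 := by
      rw [show ((x:ℂ) + (-T)*I)^2 = (((x:ℝ):ℂ) + ((-T:ℝ):ℂ)*I)^2 by push_cast; ring,
        norm_pow, Complex.sq_norm, Complex.normSq_add_mul_I]
      ring
    rw [h2] at h1
    have : x^2 ≤ 1 := by nlinarith [abs_nonneg x, _root_.sq_abs x]
    linarith
  have h3 := Real.rpow_le_rpow (norm_nonneg _) habs hμ
  calc Real.exp (2*π*lam*(-T)) * ‖(1 - ((x:ℂ) + (-T)*I)^2)‖ ^ μ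
      ≤ Real.exp (2*π*lam*(-T)) * (2+T^2)^μ :=
        mul_le_mul_of_nonneg_left h3 (Real.exp_nonneg _)
  _ = Real.exp (-(2*π*lam*T)) * (2+T^2)^μ := by ring_nf

lemma bottom_tendsto {μ lam : ℝ} (hμ : 0 ≤ μ) (hlam : 0 < lam) :
    Filter.Tendsto (fun T : ℝ => ∫ x in (-1:ℝ)..1, Ef μ lam (x + (-T) * I))
      Filter.atTop (nhds 0) := by
  have hc : 0 < 2*π*lam := by positivity
  have hg : Filter.Tendsto (fun T : ℝ => (2*2^μ) * (T^(2*μ) * Real.exp (-(2*π*lam)*T)))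
      Filter.atTop (nhds 0) := by
    have h0 := (tendsto_rpow_mul_exp_neg_mul_atTop_nhds_zero (2*μ) (2*π*lam) hc).const_mul
      (2*2^μ)
    simpa using h0
  refine squeeze_zero_norm' ?_ hg
  filter_upwards [Filter.eventually_ge_atTop (2:ℝ)] with T hT
  have hb : ∀ x ∈ Set.uIoc (-1:ℝ) 1, ‖Ef μ lam (x + (-T) * I)‖ ≤
      Real.exp (-(2*π*lam*T)) * (2+T^2)^μ := by
    intro x hx
    rw [Set.uIoc_of_le (by norm_num : (-1:ℝ) ≤ 1)] at hx
    exact norm_Ef_bottom_le hμ (abs_le.2 ⟨hx.1.le, hx.2⟩)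
  have h1 := intervalIntegral.norm_integral_le_of_norm_le_const hb
  rw [show |(1:ℝ) - (-1)| = 2 by norm_num] at h1
  refine le_trans h1 ?_
  have h2 : ((2:ℝ)+T^2)^μ ≤ 2^μ * T^(2*μ) := by
    have e1 : (2:ℝ)+T^2 ≤ 2*T^2 := by nlinarith
    have e2 : ((2:ℝ)*T^2)^μ = 2^μ * (T^2)^μ := Real.mul_rpow (by norm_num) (by positivity)
    have e3 : ((T:ℝ)^2)^μ = T^(2*μ) := by
      rw [← Real.rpow_natCast T 2, ← Real.rpow_mul (by linarith)]
      norm_num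
    calc ((2:ℝ)+T^2)^μ ≤ (2*T^2)^μ := Real.rpow_le_rpow (by positivity) e1 hμ
    _ = 2^μ * T^(2*μ) := by rw [e2, e3]
  calc Real.exp (-(2*π*lam*T)) * (2+T^2)^μ * 2
      ≤ Real.exp (-(2*π*lam*T)) * (2^μ * T^(2*μ)) * 2 := by
        have := mul_le_mul_of_nonneg_left h2 (Real.exp_nonneg (-(2*π*lam*T)))
        nlinarith [Real.exp_nonneg (-(2*π*lam*T))]
  _ = (2*2^μ) * (T^(2*μ) * Real.exp (-(2*π*lam)*T)) := by ring_nf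

lemma oneD_norm_le_big {μ lam : ℝ} (hμ : 1 ≤ μ) (hlam : 1 ≤ lam) :
    ‖oneD μ lam‖ ≤ 2 * ∫ s in Ioi (0:ℝ), maj2 μ lam s := by
  have hμ0 : (0:ℝ) < μ := lt_of_lt_of_le one_pos hμ
  have hlam0 : (0:ℝ) < lam := lt_of_lt_of_le one_pos hlam
  have hcont : ∀ ε : ℝ, (ε = 1 ∨ ε = -1) →
      ContinuousOn (fun s : ℝ => Ef μ lam (ε - s*I)) (Ioi 0) := by
    intro ε hε s hs
    apply ContinuousAt.continuousWithinAt
    have h1 : ContinuousAt (fun s : ℝ => ((ε:ℂ) - s*I)) s := by fun_prop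
    have h2 : ContinuousAt (Ef μ lam) ((ε:ℂ) - s*I) := by
      have hexp : ContinuousAt (fun z : ℂ => Complex.exp (-(2*π*lam) * z * I))
        ((ε:ℂ) - s*I) := by fun_prop
      refine hexp.mul (contAt hμ0 ?_)
      intro him
      exfalso
      have he : ((ε:ℂ) - s*I).im = -s := by simp
      rw [he] at him
      have : (0:ℝ) < s := hs
      linarith
    exact ContinuousAt.comp (f := fun s : ℝ => ((ε:ℂ) - s*I)) h2 h1
  have hmaj := maj2_integrable hμ0.le hlam0
  have hbR : ∀ᵐ (s : ℝ) ∂(volume.restrict (Ioi (0:ℝ))),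
      ‖Ef μ lam (1 - (s:ℂ)*I)‖ ≤ maj2 μ lam s := by
    refine (ae_restrict_iff' measurableSet_Ioi).2 (Filter.Eventually.of_forall fun s hs => ?_)
    have h := le_trans (norm_Ef_side_le (lam := lam) hμ0.le (le_of_lt hs) 1 (Or.inl rfl))
      (side_le_maj2 hμ0.le (le_of_lt hs))
    simpa using h
  have hbL : ∀ᵐ (s : ℝ) ∂(volume.restrict (Ioi (0:ℝ))),
      ‖Ef μ lam (-1 - (s:ℂ)*I)‖ ≤ maj2 μ lam s := by
    refine (ae_restrict_iff' measurableSet_Ioi).2 (Filter.Eventually.of_forall fun s hs => ?_)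
    have h := le_trans (norm_Ef_side_le (lam := lam) hμ0.le (le_of_lt hs) (-1) (Or.inr rfl))
      (side_le_maj2 hμ0.le (le_of_lt hs))
    simpa using h
  have hcR : ContinuousOn (fun s : ℝ => Ef μ lam (1 - (s:ℂ)*I)) (Ioi 0) := by
    simpa using hcont 1 (Or.inl rfl)
  have hcL : ContinuousOn (fun s : ℝ => Ef μ lam (-1 - (s:ℂ)*I)) (Ioi 0) := by
    simpa using hcont (-1) (Or.inr rfl)
  have hR : IntegrableOn (fun s : ℝ => Ef μ lam (1 - (s:ℂ)*I)) (Ioi 0) :=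
    Integrable.mono' hmaj (hcR.aestronglyMeasurable measurableSet_Ioi) hbR
  have hL : IntegrableOn (fun s : ℝ => Ef μ lam (-1 - (s:ℂ)*I)) (Ioi 0) :=
    Integrable.mono' hmaj (hcL.aestronglyMeasurable measurableSet_Ioi) hbL
  have hid : oneD μ lam = I • (∫ s in Ioi (0:ℝ), Ef μ lam (1 - s*I))
      - I • (∫ s in Ioi (0:ℝ), Ef μ lam (-1 - s*I)) := by
    have hlim1 := bottom_tendsto hμ0.le hlam0 (μ := μ) (lam := lam)
    have hlimR := MeasureTheory.intervalIntegral_tendsto_integral_Ioi 0 hR Filter.tendsto_id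
    have hlimL := MeasureTheory.intervalIntegral_tendsto_integral_Ioi 0 hL Filter.tendsto_id
    have hcomb := (hlim1.add (hlimR.const_smul (I:ℂ))).sub (hlimL.const_smul (I:ℂ))
    rw [zero_add] at hcomb
    refine tendsto_nhds_unique ?_ hcomb
    apply Filter.Tendsto.congr' ?_ tendsto_const_nhds
    filter_upwards [Filter.eventually_gt_atTop (0:ℝ)] with T hT
    rw [oneD_eq_intervalIntegral hμ0, rect hμ0 hT]
    have hconv : ∀ ε : ℝ, (ε = 1 ∨ ε = -1) →
        (∫ y in (-T:ℝ)..0, Ef μ lam (ε + y * I)) = ∫ s in (0:ℝ)..T, Ef μ lam (ε - s*I) := by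
      intro ε hε
      have h0 := intervalIntegral.integral_comp_neg (a := (0:ℝ)) (b := T)
        (fun y : ℝ => Ef μ lam (ε + y*I))
      simp only [neg_zero] at h0
      rw [← h0]
      refine intervalIntegral.integral_congr (fun s _ => ?_)
      congr 1
      push_cast
      ring
    have hc1 := hconv 1 (Or.inl rfl)
    have hc2 := hconv (-1) (Or.inr rfl)
    push_cast at hc1 hc2
    rw [hc1, hc2]
    simp only [id_eq]
  rw [hid]
  have hb1 : ‖I • (∫ s in Ioi (0:ℝ), Ef μ lam (1 - s*I))‖ ≤ ∫ s in Ioi (0:ℝ), maj2 μ lam s := by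
    rw [norm_smul, Complex.norm_I, one_mul]
    exact norm_integral_le_of_norm_le hmaj hbR
  have hb2 : ‖I • (∫ s in Ioi (0:ℝ), Ef μ lam (-1 - s*I))‖ ≤ ∫ s in Ioi (0:ℝ), maj2 μ lam s := by
    rw [norm_smul, Complex.norm_I, one_mul]
    exact norm_integral_le_of_norm_le hmaj hbL
  refine le_trans (norm_sub_le _ _) ?_
  linarith

lemma rpow_neg_anti {x y a : ℝ} (hx : 0 < x) (hxy : x ≤ y) (ha : 0 ≤ a) :
    y^(-a) ≤ x^(-a) := by
  rw [Real.rpow_neg hx.le, Real.rpow_neg (by linarith)]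
  exact inv_anti₀ (Real.rpow_pos_of_pos hx a) (Real.rpow_le_rpow hx.le hxy ha)

lemma maj2_integral_le {μ lam : ℝ} (hμ : 1 ≤ μ) (hlam : 1 ≤ lam) :
    ∫ s in Ioi (0:ℝ), maj2 μ lam s ≤
      (2^μ * Real.Gamma (2*μ+1) + 4^μ * Real.Gamma (μ+1)) * lam^(-(μ+1)) := by
  have hμ0 : (0:ℝ) < μ := lt_of_lt_of_le one_pos hμ
  have hlam0 : (0:ℝ) < lam := lt_of_lt_of_le one_pos hlam
  have hc : (0:ℝ) < 2*π*lam := by positivity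
  have h1 : ∫ s in Ioi (0:ℝ), s^(2*μ) * Real.exp (-(2*π*lam*s))
      = (1/(2*π*lam))^(2*μ+1) * Real.Gamma (2*μ+1) := by
    have h := integral_rpow_mul_exp_neg_mul_Ioi (a := 2*μ+1) (r := 2*π*lam) (by linarith) hc
    simp only [add_sub_cancel_right] at h
    rw [← h]
  have h2 : ∫ s in Ioi (0:ℝ), s^μ * Real.exp (-(2*π*lam*s))
      = (1/(2*π*lam))^(μ+1) * Real.Gamma (μ+1) := by
    have h := integral_rpow_mul_exp_neg_mul_Ioi (a := μ+1) (r := 2*π*lam) (by linarith) hc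
    simp only [add_sub_cancel_right] at h
    rw [← h]
  have hi1 := exp_rpow_integrable (show (0:ℝ) ≤ 2*μ by linarith) hc
  have hi2 := exp_rpow_integrable (show (0:ℝ) ≤ μ by linarith) hc
  have hsplit : ∫ s in Ioi (0:ℝ), maj2 μ lam s
      = 2^μ * ((1/(2*π*lam))^(2*μ+1) * Real.Gamma (2*μ+1))
        + 2^μ*2^μ * ((1/(2*π*lam))^(μ+1) * Real.Gamma (μ+1)) := by
    unfold maj2
    rw [integral_add ((hi1.const_mul _)) ((hi2.const_mul _)),
      integral_const_mul, integral_const_mul, h1, h2]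
  rw [hsplit]
  have hkey : ∀ a : ℝ, μ+1 ≤ a → (1/(2*π*lam))^a ≤ lam^(-(μ+1)) := by
    intro a ha
    have ha0 : (0:ℝ) ≤ a := by linarith
    have e1 : (1/(2*π*lam) : ℝ) = (2*π*lam)⁻¹ := one_div _
    have h3 : (2*π*lam : ℝ)⁻¹ ≤ lam⁻¹ := by
      apply inv_anti₀ hlam0
      nlinarith [Real.pi_gt_three]
    have h4 : ((2*π*lam:ℝ)⁻¹)^a ≤ (lam⁻¹)^a :=
      Real.rpow_le_rpow (by positivity) h3 ha0
    have h5 : ((lam:ℝ)⁻¹)^a ≤ (lam⁻¹)^(μ+1) := by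
      apply Real.rpow_le_rpow_of_exponent_ge (by positivity) _ ha
      rw [inv_le_one_iff₀]
      right; exact hlam
    have h6 : ((lam:ℝ)⁻¹)^(μ+1) = lam^(-(μ+1)) := by
      rw [Real.inv_rpow hlam0.le, ← Real.rpow_neg hlam0.le]
    rw [e1]
    calc ((2*π*lam:ℝ)⁻¹)^a ≤ (lam⁻¹)^a := h4
    _ ≤ (lam⁻¹)^(μ+1) := h5
    _ = lam^(-(μ+1)) := h6
  have hg1 : (0:ℝ) ≤ Real.Gamma (2*μ+1) := (Real.Gamma_pos_of_pos (by linarith)).le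
  have hg2 : (0:ℝ) ≤ Real.Gamma (μ+1) := (Real.Gamma_pos_of_pos (by linarith)).le
  have hp1 : (0:ℝ) ≤ 2^μ := Real.rpow_nonneg (by norm_num) μ
  have b1 := hkey (2*μ+1) (by linarith)
  have b2 := hkey (μ+1) (by linarith)
  have e4 : (2:ℝ)^μ*2^μ = 4^μ := by
    rw [← Real.mul_rpow (by norm_num) (by norm_num)]; norm_num
  rw [e4]
  have h7 : (2:ℝ)^μ * ((1/(2*π*lam))^(2*μ+1) * Real.Gamma (2*μ+1))
      ≤ 2^μ * Real.Gamma (2*μ+1) * lam^(-(μ+1)) := by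
    have := mul_le_mul_of_nonneg_right b1 hg1
    nlinarith [this, hp1, hg1]
  have h8 : (4:ℝ)^μ * ((1/(2*π*lam))^(μ+1) * Real.Gamma (μ+1))
      ≤ 4^μ * Real.Gamma (μ+1) * lam^(-(μ+1)) := by
    have hp4 : (0:ℝ) ≤ 4^μ := Real.rpow_nonneg (by norm_num) μ
    have := mul_le_mul_of_nonneg_right b2 hg2
    nlinarith [this, hp4, hg2]
  linarith [h7, h8]

lemma oneD_decay {μ : ℝ} (hμ : 1 ≤ μ) :
    ∃ C : ℝ, 0 < C ∧ ∀ lam : ℝ, 0 ≤ lam → ‖oneD μ lam‖ ≤ C * (1+lam)^(-(μ+1)) := by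
  have hμ0 : (0:ℝ) < μ := lt_of_lt_of_le one_pos hμ
  set D : ℝ := 2 * ((2^μ * Real.Gamma (2*μ+1) + 4^μ * Real.Gamma (μ+1))) with hD
  have hD0 : 0 < D := by
    have hg1 := Real.Gamma_pos_of_pos (show (0:ℝ) < 2*μ+1 by linarith)
    have hg2 := Real.Gamma_pos_of_pos (show (0:ℝ) < μ+1 by linarith)
    have hp1 : (0:ℝ) < 2^μ := Real.rpow_pos_of_pos (by norm_num) μ
    have hp4 : (0:ℝ) < 4^μ := Real.rpow_pos_of_pos (by norm_num) μ
    positivity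
  refine ⟨2^(μ+2) + 2^(μ+1) * D, by positivity, fun lam hlam => ?_⟩
  have hpow_pos : (0:ℝ) < (1+lam)^(-(μ+1)) := Real.rpow_pos_of_pos (by linarith) _
  rcases le_or_gt lam 1 with hle | hgt
  · -- small lam
    have hb : ‖oneD μ lam‖ ≤ 2 := oneD_norm_le_two hμ0 lam
    have h1 : (2:ℝ)^(-(μ+1)) ≤ (1+lam)^(-(μ+1)) := by
      apply rpow_neg_anti (by linarith) (by linarith) (by linarith)
    have h2 : (2:ℝ) = 2^(μ+2) * 2^(-(μ+1)) := by
      rw [← Real.rpow_add (by norm_num : (0:ℝ) < 2),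
        show μ+2 + (-(μ+1)) = 1 by ring, Real.rpow_one]
    calc ‖oneD μ lam‖ ≤ 2 := hb
    _ = 2^(μ+2) * 2^(-(μ+1)) := h2
    _ ≤ 2^(μ+2) * (1+lam)^(-(μ+1)) := by
      apply mul_le_mul_of_nonneg_left h1 (Real.rpow_nonneg (by norm_num) _)
    _ ≤ (2^(μ+2) + 2^(μ+1) * D) * (1+lam)^(-(μ+1)) := by
      have : (0:ℝ) ≤ 2^(μ+1) * D := by positivity
      nlinarith [hpow_pos]
  · -- big lam
    have hlam1 : (1:ℝ) ≤ lam := hgt.le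
    have hb := oneD_norm_le_big hμ hlam1
    have hint := maj2_integral_le hμ hlam1
    have h3 : ‖oneD μ lam‖ ≤ D * lam^(-(μ+1)) := by
      rw [hD]
      calc ‖oneD μ lam‖ ≤ 2 * ∫ s in Ioi (0:ℝ), maj2 μ lam s := hb
      _ ≤ 2 * ((2^μ * Real.Gamma (2*μ+1) + 4^μ * Real.Gamma (μ+1)) * lam^(-(μ+1))) := by
          linarith
      _ = 2 * (2^μ * Real.Gamma (2*μ+1) + 4^μ * Real.Gamma (μ+1)) * lam^(-(μ+1)) := by ring
    have h4 : lam^(-(μ+1)) ≤ 2^(μ+1) * (1+lam)^(-(μ+1)) := by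
      have e1 : ((1+lam)/2 : ℝ) ≤ lam := by linarith
      have e2 : ((1+lam)/2 : ℝ)^(-(μ+1)) = 2^(μ+1) * (1+lam)^(-(μ+1)) := by
        rw [div_eq_mul_inv, Real.mul_rpow (by linarith) (by norm_num),
          Real.inv_rpow (by norm_num), Real.rpow_neg (by norm_num : (0:ℝ) ≤ 2), inv_inv]
        ring
      calc lam^(-(μ+1)) ≤ ((1+lam)/2)^(-(μ+1)) :=
        rpow_neg_anti (by linarith) e1 (by linarith)
      _ = 2^(μ+1) * (1+lam)^(-(μ+1)) := e2
    calc ‖oneD μ lam‖ ≤ D * lam^(-(μ+1)) := h3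
    _ ≤ D * (2^(μ+1) * (1+lam)^(-(μ+1))) := mul_le_mul_of_nonneg_left h4 hD0.le
    _ = 2^(μ+1) * D * (1+lam)^(-(μ+1)) := by ring
    _ ≤ (2^(μ+2) + 2^(μ+1) * D) * (1+lam)^(-(μ+1)) := by
      have : (0:ℝ) ≤ 2^(μ+2) := Real.rpow_nonneg (by norm_num) _
      nlinarith [hpow_pos]

/-- the dimensional constant -/
def Kc (m : ℕ) (δ : ℝ) : ℝ := ∫ u : Fin m → ℝ, ((1 - ∑ i, (u i)^2) ⊔ 0)^δ

lemma Kc_nonneg (m : ℕ) (δ : ℝ) : 0 ≤ Kc m δ :=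
  integral_nonneg fun u => Real.rpow_nonneg le_sup_right δ

lemma brKernel_radial {m : ℕ} (δ : ℝ) (x : Rn (m+1)) :
    brKernel (m+1) δ x
      = brKernel (m+1) δ (‖x‖ • EuclideanSpace.single (0 : Fin (m+1)) (1:ℝ)) := by
  set v : Rn (m+1) := ‖x‖ • EuclideanSpace.single (0 : Fin (m+1)) (1:ℝ) with hvdef
  have hv : ‖v‖ = ‖x‖ := by
    rw [hvdef, norm_smul, EuclideanSpace.norm_single, norm_one, mul_one, norm_norm]
  set A := (ℝ ∙ (v - x))ᗮ.reflection with hA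
  have hAv : A v = x := Submodule.reflection_sub hv
  unfold brKernel
  have h1 := Real.fourier_comp_linearIsometry (A : Rn (m+1) ≃ₗᵢ[ℝ] Rn (m+1))
    (fun ξ : Rn (m+1) => ((((1 - ‖ξ‖ ^ 2) ⊔ 0) ^ δ : ℝ) : ℂ)) v
  have h2 : ((fun ξ : Rn (m+1) => ((((1 - ‖ξ‖ ^ 2) ⊔ 0) ^ δ : ℝ) : ℂ)) ∘ A)
      = (fun ξ : Rn (m+1) => ((((1 - ‖ξ‖ ^ 2) ⊔ 0) ^ δ : ℝ) : ℂ)) := by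
    funext ξ
    simp [Function.comp, A.norm_map]
  rw [h2, hAv] at h1
  exact h1.symm

lemma scale {m : ℕ} {δ : ℝ} (hδ : 0 < δ) (a : ℝ) :
    (∫ u : Fin m → ℝ, ((a - ∑ i, (u i)^2) ⊔ 0)^δ)
      = ((a ⊔ 0)^(δ + m/2)) * Kc m δ := by
  rcases le_or_gt a 0 with ha | ha
  · have h1 : ∀ u : Fin m → ℝ, ((a - ∑ i, (u i)^2) ⊔ 0)^δ = 0 := fun u => by
      have h0 : (0:ℝ) ≤ ∑ i, (u i)^2 := Finset.sum_nonneg fun i _ => sq_nonneg _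
      rw [sup_eq_right.2 (by linarith : a - ∑ i, (u i)^2 ≤ 0), Real.zero_rpow hδ.ne']
    have h2 : (a ⊔ 0 : ℝ) = 0 := sup_eq_right.2 ha
    simp [h1, h2, Real.zero_rpow (by positivity : δ + (m:ℝ)/2 ≠ 0)]
  · set s := Real.sqrt a with hs
    have hs0 : 0 < s := Real.sqrt_pos.2 ha
    have key := MeasureTheory.Measure.integral_comp_smul (μ := (volume : Measure (Fin m → ℝ)))
      (fun u : Fin m → ℝ => ((a - ∑ i, (u i)^2) ⊔ 0)^δ) s
    have hrank : Module.finrank ℝ (Fin m → ℝ) = m := by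
      simp [Module.finrank_fintype_fun_eq_card]
    rw [hrank] at key
    have hfs : ∀ u : Fin m → ℝ, ((a - ∑ i, ((s • u) i)^2) ⊔ 0)^δ
        = a^δ * ((1 - ∑ i, (u i)^2) ⊔ 0)^δ := by
      intro u
      have e1 : ∑ i, ((s • u) i)^2 = a * ∑ i, (u i)^2 := by
        simp only [Pi.smul_apply, smul_eq_mul, mul_pow, ← Finset.mul_sum, hs,
          Real.sq_sqrt ha.le]
      rw [e1, show a - a * ∑ i, (u i)^2 = a * (1 - ∑ i, (u i)^2) by ring]
      rw [show (a * (1 - ∑ i, (u i)^2)) ⊔ 0 = a * ((1 - ∑ i, (u i)^2) ⊔ 0) by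
        rw [mul_max_of_nonneg _ _ ha.le, mul_zero]]
      exact Real.mul_rpow ha.le le_sup_right
    simp only [hfs] at key
    rw [integral_const_mul] at key
    have habs : |((s^m:ℝ))⁻¹| = (s^m)⁻¹ := abs_of_nonneg (by positivity)
    rw [habs, smul_eq_mul] at key
    -- key : a^δ * ∫ u, ((1 - ∑ u²)⊔0)^δ = (s^m)⁻¹ * ∫ f
    have hKc : a^δ * Kc m δ = (s^m)⁻¹ * ∫ u : Fin m → ℝ, ((a - ∑ i, (u i)^2) ⊔ 0)^δ := by
      rw [Kc, key]
    have hsm : (s:ℝ)^m = a^((m:ℝ)/2) := by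
      rw [hs, Real.sqrt_eq_rpow, ← Real.rpow_natCast (a ^ (1/(2:ℝ))) m,
        ← Real.rpow_mul ha.le]
      ring_nf
    have hsup : (a ⊔ 0 : ℝ) = a := sup_eq_left.2 ha.le
    rw [hsup, Real.rpow_add ha]
    have hsm0 : (0:ℝ) < s^m := by positivity
    field_simp at hKc
    rw [← hKc]
    ring_nf
    rw [hsm]
    ring

/-- integrand on the product space -/
def Psi (m : ℕ) (δ r : ℝ) : ℝ × (Fin m → ℝ) → ℂ := fun p =>
  Complex.exp (((-2*π*(p.1*r) : ℝ) : ℂ) * I) *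
    ((((1 - (p.1^2 + ∑ i, (p.2 i)^2)) ⊔ 0) ^ δ : ℝ) : ℂ)

lemma Psi_continuous (m : ℕ) {δ : ℝ} (hδ : 0 < δ) (r : ℝ) : Continuous (Psi m δ r) := by
  have hq : Continuous (fun p : ℝ × (Fin m → ℝ) => p.1^2 + ∑ i, (p.2 i)^2) := by
    apply Continuous.add
    · exact continuous_fst.pow 2
    · exact continuous_finset_sum _ (fun i _ => ((continuous_apply i).comp continuous_snd).pow 2)
  have hc : Continuous (fun x : ℝ => ((1 - x) ⊔ 0)^δ) := by
    rw [continuous_iff_continuousAt]; intro x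
    exact (Real.continuousAt_rpow_const _ δ (Or.inr hδ.le)).comp
      ((continuous_const.sub continuous_id).sup continuous_const).continuousAt
  have hexp : Continuous (fun p : ℝ × (Fin m → ℝ) =>
      Complex.exp (((-2*π*(p.1*r) : ℝ) : ℂ) * I)) := by fun_prop
  exact hexp.mul (Complex.continuous_ofReal.comp (hc.comp hq))

lemma Psi_compactSupport (m : ℕ) {δ : ℝ} (hδ : 0 < δ) (r : ℝ) :
    HasCompactSupport (Psi m δ r) := by
  apply HasCompactSupport.intro (isCompact_closedBall (0 : ℝ × (Fin m → ℝ)) 1)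
  intro p hp
  have h1 : (1:ℝ) < ‖p‖ := by
    rw [mem_closedBall, dist_zero_right] at hp
    linarith [not_le.1 hp]
  have hq : (1:ℝ) ≤ p.1^2 + ∑ i, (p.2 i)^2 := by
    rw [Prod.norm_def] at h1
    have hsum : (0:ℝ) ≤ ∑ i, (p.2 i)^2 := Finset.sum_nonneg fun i _ => sq_nonneg _
    rcases lt_max_iff.1 h1 with h | h
    · have h3 : (1:ℝ) < p.1^2 := by
        rw [Real.norm_eq_abs] at h
        nlinarith [h, abs_nonneg p.1, _root_.sq_abs p.1]
      linarith
    · have h2 : ¬ (∀ i, ‖p.2 i‖ ≤ 1) := by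
        intro hall
        have := (pi_norm_le_iff_of_nonneg (zero_le_one)).2 hall
        linarith
      push_neg at h2
      obtain ⟨i, hi⟩ := h2
      have h3 : (1:ℝ) < (p.2 i)^2 := by
        rw [Real.norm_eq_abs] at hi
        nlinarith [hi, abs_nonneg (p.2 i), _root_.sq_abs (p.2 i)]
      have h4 : (p.2 i)^2 ≤ ∑ j, (p.2 j)^2 :=
        Finset.single_le_sum (fun j _ => sq_nonneg (p.2 j)) (Finset.mem_univ i)
      nlinarith [sq_nonneg p.1]
  have h2 : (1 - (p.1^2 + ∑ i, (p.2 i)^2)) ⊔ 0 = 0 :=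
    sup_eq_right.2 (by linarith)
  simp only [Psi]
  rw [h2, Real.zero_rpow hδ.ne']
  simp

lemma eucl_norm_sq {k : ℕ} (ξ : Rn k) : ‖ξ‖^2 = ∑ i, (ξ i)^2 := by
  rw [EuclideanSpace.norm_eq, Real.sq_sqrt (by positivity)]
  refine Finset.sum_congr rfl (fun i _ => ?_)
  rw [Real.norm_eq_abs, _root_.sq_abs]

lemma reduce {m : ℕ} {δ : ℝ} (hδ : 0 < δ) (r : ℝ) :
    brKernel (m+1) δ ((r : ℝ) • EuclideanSpace.single (0 : Fin (m+1)) (1:ℝ))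
      = (Kc m δ) • oneD (δ + m/2) r := by
  unfold brKernel
  refine (Real.fourier_eq' (fun ξ : Rn (m+1) => ((((1 - ‖ξ‖ ^ 2) ⊔ 0) ^ δ : ℝ) : ℂ)) _).trans ?_
  set G : (Fin (m+1) → ℝ) → ℂ := fun y =>
    Complex.exp (((-2*π*(y 0 * r) : ℝ) : ℂ) * I) *
      ((((1 - ∑ i, (y i)^2) ⊔ 0) ^ δ : ℝ) : ℂ) with hG
  -- step 1: Rn integral to pi integral
  have step1 : (∫ ξ : Rn (m+1), Complex.exp
        (((-2 * π * (inner ℝ ξ ((r : ℝ) • EuclideanSpace.single (0 : Fin (m+1)) (1:ℝ)) : ℝ) : ℝ) : ℂ) * I)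
        • ((((1 - ‖ξ‖ ^ 2) ⊔ 0) ^ δ : ℝ) : ℂ))
      = ∫ y : Fin (m+1) → ℝ, G y := by
    rw [← MeasurePreserving.integral_comp
      (EuclideanSpace.volume_preserving_symm_measurableEquiv_toLp (Fin (m+1)))
      (MeasurableEquiv.toLp 2 (Fin (m+1) → ℝ)).symm.measurableEmbedding G]
    refine integral_congr_ae (Filter.Eventually.of_forall (fun ξ => ?_))
    have happ : ∀ i, ((MeasurableEquiv.toLp 2 (Fin (m+1) → ℝ)).symm ξ) i = ξ i := fun i => rfl
    rw [hG]
    simp only [happ]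
    rw [smul_eq_mul]
    congr 2
    · congr 1
      push_cast
      congr 1
      rw [real_inner_smul_right, EuclideanSpace.inner_single_right]
      simp
      ring
    · rw [eucl_norm_sq]
  rw [step1]
  -- step 2: pi integral to product integral
  have step2 : (∫ y : Fin (m+1) → ℝ, G y) = ∫ p : ℝ × (Fin m → ℝ), Psi m δ r p := by
    rw [← MeasurePreserving.integral_comp
      (MeasureTheory.volume_preserving_piFinSuccAbove (fun _ : Fin (m+1) => ℝ) 0)
      (MeasurableEquiv.piFinSuccAbove (fun _ : Fin (m+1) => ℝ) 0).measurableEmbedding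
      (Psi m δ r)]
    refine integral_congr_ae (Filter.Eventually.of_forall (fun y => ?_))
    show G y = Psi m δ r ((MeasurableEquiv.piFinSuccAbove (fun _ : Fin (m+1) => ℝ) 0) y)
    have happ : (MeasurableEquiv.piFinSuccAbove (fun _ : Fin (m+1) => ℝ) 0) y
        = (y 0, fun i => y ((0 : Fin (m+1)).succAbove i)) := rfl
    rw [happ, hG, Psi]
    simp only
    congr 3
    rw [Fin.sum_univ_succAbove (fun i => (y i)^2) 0]
  rw [step2]
  -- step 3: product integral to iterated
  have hInt : Integrable (Psi m δ r) (volume.prod volume) := by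
    rw [← MeasureTheory.Measure.volume_eq_prod]
    exact (Psi_continuous m hδ r).integrable_of_hasCompactSupport (Psi_compactSupport m hδ r)
  rw [MeasureTheory.Measure.volume_eq_prod, MeasureTheory.integral_prod _ hInt]
  -- step 4: inner integral
  have step4 : ∀ t : ℝ, (∫ u : Fin m → ℝ, Psi m δ r (t, u))
      = (Kc m δ : ℂ) * (Complex.exp (((-2*π*(t*r) : ℝ) : ℂ) * I) *
          ((g (δ + m/2) t : ℝ) : ℂ)) := by
    intro t
    unfold Psi
    simp only
    rw [integral_const_mul]
    have e1 : ∀ u : Fin m → ℝ, ((1 - (t^2 + ∑ i, (u i)^2)) ⊔ 0 : ℝ)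
        = (((1-t^2) - ∑ i, (u i)^2) ⊔ 0 : ℝ) := fun u => by ring_nf
    have e3 : (∫ u : Fin m → ℝ, ((1 - (t^2 + ∑ i, (u i)^2)) ⊔ 0) ^ δ)
        = ((1-t^2) ⊔ 0)^(δ + m/2) * Kc m δ := by
      rw [← scale hδ (1-t^2)]
      refine integral_congr_ae (Filter.Eventually.of_forall (fun u => ?_))
      exact congrArg (fun x : ℝ => x ^ δ) (e1 u)
    have e2 : (∫ u : Fin m → ℝ, ((((1 - (t^2 + ∑ i, (u i)^2)) ⊔ 0) ^ δ : ℝ) : ℂ))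
        = (((((1-t^2) ⊔ 0)^(δ + m/2)) * Kc m δ : ℝ) : ℂ) := by
      rw [← e3]
      exact integral_ofReal
    rw [e2, g]
    push_cast
    ring
  rw [integral_congr_ae (Filter.Eventually.of_forall step4), integral_const_mul]
  rw [Complex.real_smul, oneD]

end BRAux

/-- Pointwise decay estimate for the Bochner–Riesz kernel:
`|φ^δ(x)| ≤ C (1 + |x|)^{-((n+1)/2 + δ)}` for `δ ≥ (n-1)/2`. -/
theorem brKernel_decay (n : ℕ) (hn : 2 ≤ n) (δ : ℝ) (hδ : ((n : ℝ) - 1) / 2 ≤ δ) :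
    ∃ C : ℝ, 0 < C ∧ ∀ x : Rn n,
      ‖brKernel n δ x‖ ≤ C * (1 + ‖x‖) ^ (-(((n : ℝ) + 1) / 2 + δ)) := by
  obtain ⟨m, rfl⟩ : ∃ m : ℕ, n = m + 1 := ⟨n - 1, by omega⟩
  have hm : 1 ≤ m := by omega
  have hmr : (1:ℝ) ≤ m := by exact_mod_cast hm
  have hδ' : (m:ℝ)/2 ≤ δ := by
    have : ((m:ℝ) + 1 - 1)/2 ≤ δ := by exact_mod_cast hδ
    linarith
  have hδ0 : 0 < δ := by linarith
  set μ : ℝ := δ + (m:ℝ)/2 with hμdef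
  have hμ1 : 1 ≤ μ := by rw [hμdef]; linarith
  obtain ⟨C₁, hC₁, hbound⟩ := BRAux.oneD_decay hμ1
  have hK := BRAux.Kc_nonneg m δ
  refine ⟨(BRAux.Kc m δ + 1) * C₁, by positivity, fun x => ?_⟩
  rw [BRAux.brKernel_radial δ x, BRAux.reduce hδ0 ‖x‖]
  rw [norm_smul, Real.norm_eq_abs, _root_.abs_of_nonneg hK]
  have h2 := hbound ‖x‖ (norm_nonneg x)
  have hpow_pos : (0:ℝ) < (1+‖x‖)^(-(μ+1)) :=
    Real.rpow_pos_of_pos (by linarith [norm_nonneg x]) _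
  calc BRAux.Kc m δ * ‖BRAux.oneD μ ‖x‖‖
      ≤ BRAux.Kc m δ * (C₁ * (1+‖x‖)^(-(μ+1))) :=
        mul_le_mul_of_nonneg_left h2 hK
  _ ≤ (BRAux.Kc m δ + 1) * C₁ * (1+‖x‖)^(-(μ+1)) := by nlinarith [hpow_pos, hC₁]
  _ = (BRAux.Kc m δ + 1) * C₁ * (1 + ‖x‖) ^ (-((((m+1 : ℕ) : ℝ) + 1) / 2 + δ)) := by
    congr 1
    congr 1
    push_cast
    ring
end
end

section
/- Let n ≥ 2 and δ = (n−1)/2. There exists a constant C > 0 such that for every ball B = B(x₀, r_B) ⊂ ℝⁿ, every locally integrable function f that vanishes on the ball 2B, and every x ∈ B, the maximal Bochner-Riesz operator satisfies T^δ_* f(x) ≤ C · Σ_{j=1}^∞ |2^{j+1}B|⁻¹ ∫_{2^{j+1}B} |f(y)| dy. -/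
open MeasureTheory Metric ENNReal

noncomputable section

section AuxBR
open Real Polynomial FourierTransform


-- IBP step
lemma ibp_step (z : ℂ) (hz : z ≠ 0) (q : Polynomial ℝ) :
    ∫ t in (-1:ℝ)..1, Complex.exp (z*t) * ((q.eval t : ℝ) : ℂ)
      = (q.eval 1 : ℝ) * Complex.exp z / z - (q.eval (-1) : ℝ) * Complex.exp (-z) / z
        - (1/z) * ∫ t in (-1:ℝ)..1, Complex.exp (z*t) * ((q.derivative.eval t : ℝ) : ℂ) := by
  have hu : ∀ x ∈ Set.uIcc (-1:ℝ) 1, HasDerivAt (fun t : ℝ => ((q.eval t : ℝ) : ℂ))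
      ((q.derivative.eval x : ℝ) : ℂ) x := fun x _ => (q.hasDerivAt x).ofReal_comp
  have hv : ∀ x ∈ Set.uIcc (-1:ℝ) 1, HasDerivAt (fun t : ℝ => Complex.exp (z*t) / z)
      (Complex.exp (z*x)) x := by
    intro x _
    have h1 : HasDerivAt (fun t : ℝ => (t:ℂ)) 1 x := Complex.ofRealCLM.hasDerivAt
    have h2 : HasDerivAt (fun t : ℝ => z * (t:ℂ)) z x := by simpa using h1.const_mul z
    have h3 : HasDerivAt (fun t : ℝ => Complex.exp (z*t)) (Complex.exp (z*x) * z) x := by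
      exact (Complex.hasDerivAt_exp (z*x)).comp x h2
    simpa [mul_div_assoc, mul_div_cancel_right₀ _ hz] using h3.div_const z
  have hcont1 : Continuous fun t : ℝ => ((q.derivative.eval t : ℝ) : ℂ) :=
    Complex.continuous_ofReal.comp (q.derivative.continuous_aeval)
  have hcont2 : Continuous fun t : ℝ => Complex.exp (z*t) :=
    Complex.continuous_exp.comp (continuous_const.mul Complex.continuous_ofReal)
  have key := intervalIntegral.integral_mul_deriv_eq_deriv_mul hu hv
    (hcont1.intervalIntegrable _ _) (hcont2.intervalIntegrable _ _)
  have flip : ∀ g : ℝ → ℝ, (∫ t in (-1:ℝ)..1, Complex.exp (z*t) * ((g t : ℝ) : ℂ))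
      = ∫ t in (-1:ℝ)..1, ((g t : ℝ) : ℂ) * Complex.exp (z*t) := by
    intro g; apply intervalIntegral.integral_congr; intro t _; ring
  rw [flip, key, flip]
  rw [show (∫ t in (-1:ℝ)..1, ((q.derivative.eval t:ℝ):ℂ) * (Complex.exp (z*t)/z))
      = (1/z) * ∫ t in (-1:ℝ)..1, ((q.derivative.eval t:ℝ):ℂ) * Complex.exp (z*t) from ?_]
  · push_cast; ring
  · rw [← intervalIntegral.integral_const_mul]
    apply intervalIntegral.integral_congr; intro t _; ring

lemma norm_exp_mul_I_real (r : ℝ) : ‖Complex.exp ((r:ℂ) * Complex.I)‖ = 1 := by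
  rw [Complex.norm_exp]
  simp

lemma norm_J_le (z : ℂ) (hre : z.re = 0) (q : Polynomial ℝ) (M : ℝ)
    (hM : ∀ t ∈ Set.uIoc (-1:ℝ) 1, |q.eval t| ≤ M) :
    ‖∫ t in (-1:ℝ)..1, Complex.exp (z*t) * ((q.eval t : ℝ) : ℂ)‖ ≤ 2 * M := by
  have h := intervalIntegral.norm_integral_le_of_norm_le_const (C := M)
    (f := fun t : ℝ => Complex.exp (z*t) * ((q.eval t : ℝ) : ℂ)) (a := -1) (b := 1) ?_
  · simpa [norm_sub_rev] using h.trans_eq (by norm_num; ring)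
  · intro x hx
    rw [norm_mul, Complex.norm_exp]
    have : (z * x).re = 0 := by simp [Complex.mul_re, hre]
    rw [this, Real.exp_zero, one_mul, Complex.norm_real, Real.norm_eq_abs]
    exact hM x hx

lemma oneD_decay (m : ℕ) : ∃ C, 0 < C ∧ ∀ s : ℝ, 1 ≤ |s| →
    ‖∫ t in (-1:ℝ)..1, Complex.exp ((((-(2*π*(s*t))) : ℝ) : ℂ) * Complex.I)
        * ((((1-t^2)^m : ℝ)) : ℂ)‖ ≤ C / |s|^(m+1) := by
  classical
  set P : Polynomial ℝ := (1 - Polynomial.X^2)^m with hP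
  set Q : Polynomial ℝ := (Polynomial.derivative)^[m] P with hQ
  -- bound for the (m+1)-st derivative on [-1,1]
  obtain ⟨M, hM⟩ := (isCompact_uIcc (a := (-1:ℝ)) (b := 1)).exists_bound_of_continuousOn
    (f := fun t => Q.derivative.eval t) (Q.derivative.continuous_aeval).continuousOn
  have hM' : ∀ t ∈ Set.uIoc (-1:ℝ) 1, |Q.derivative.eval t| ≤ M := by
    intro t ht
    simpa using hM t (Set.uIoc_subset_uIcc ht)
  have hM0 : 0 ≤ M := le_trans (abs_nonneg _) (by simpa using hM 0 (by norm_num))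
  set K : ℝ := |Q.eval 1| + |Q.eval (-1)| + 2*M with hK
  have hK0 : 0 ≤ K := by positivity
  refine ⟨K + 1, by positivity, ?_⟩
  intro s hs
  have hs0 : s ≠ 0 := by intro h; rw [h] at hs; norm_num at hs
  set z : ℂ := ((-(2*π*s) : ℝ) : ℂ) * Complex.I with hz
  have hzre : z.re = 0 := by simp [hz]
  have hznorm : ‖z‖ = 2*π*|s| := by
    rw [hz, norm_mul, Complex.norm_real, Complex.norm_I, mul_one, Real.norm_eq_abs]
    rw [abs_neg, abs_mul, abs_of_pos (by positivity : (0:ℝ) < 2*π)]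
  have hz1 : (1:ℝ) ≤ ‖z‖ := by
    rw [hznorm]
    nlinarith [Real.pi_gt_three, abs_nonneg s]
  have hzpos : (0:ℝ) < ‖z‖ := lt_of_lt_of_le one_pos hz1
  have hzne : z ≠ 0 := by rw [← norm_pos_iff]; exact hzpos
  -- notation for the integrals
  set J : Polynomial ℝ → ℂ :=
    fun q => ∫ t in (-1:ℝ)..1, Complex.exp (z*t) * ((q.eval t : ℝ) : ℂ) with hJ
  -- the LHS equals ‖J P‖
  have hLHS : (∫ t in (-1:ℝ)..1, Complex.exp ((((-(2*π*(s*t))) : ℝ) : ℂ) * Complex.I)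
        * ((((1-t^2)^m : ℝ)) : ℂ)) = J P := by
    apply intervalIntegral.integral_congr
    intro t _
    have h1 : ((((-(2*π*(s*t))) : ℝ) : ℂ) * Complex.I) = z * t := by
      rw [hz]; push_cast; ring
    have h2 : P.eval t = (1-t^2)^m := by simp [hP]
    simp only [h1, h2]
  -- boundary vanishing
  have hvanish : ∀ k, k < m → ∀ x : ℝ, |x| = 1 →
      ((Polynomial.derivative)^[k] P).eval x = 0 := by
    intro k hk x hx
    obtain ⟨e, he⟩ := Polynomial.pow_sub_dvd_iterate_derivative_pow
      (1 - Polynomial.X^2 : Polynomial ℝ) m k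
    rw [hP, he, Polynomial.eval_mul, Polynomial.eval_pow]
    have hx2 : x^2 = 1 := by
      have := abs_mul_abs_self x
      rw [hx] at this; nlinarith [sq_abs x]
    have : Polynomial.eval x (1 - Polynomial.X^2 : Polynomial ℝ) = 0 := by
      simp [hx2]
    rw [this, zero_pow (by omega : m - k ≠ 0), zero_mul]
  -- the chain of integrations by parts
  have chain : ∀ k, k ≤ m → ‖J P‖ ≤ ‖J ((Polynomial.derivative)^[k] P)‖ / ‖z‖^k := by
    intro k hk
    induction k with
    | zero => simp
    | succ k ih =>
      have hk' : k ≤ m := by omega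
      have hkm : k < m := by omega
      have step := ibp_step z hzne ((Polynomial.derivative)^[k] P)
      rw [hvanish k hkm 1 (by norm_num), hvanish k hkm (-1) (by norm_num)] at step
      have : J ((Polynomial.derivative)^[k] P)
          = -(1/z) * J ((Polynomial.derivative)^[k+1] P) := by
        rw [hJ]
        simp only at step ⊢
        rw [step, Function.iterate_succ_apply']
        push_cast
        ring
      have hnorm : ‖J ((Polynomial.derivative)^[k] P)‖
          = ‖J ((Polynomial.derivative)^[k+1] P)‖ / ‖z‖ := by
        rw [this, norm_mul, norm_neg, norm_div, norm_one]
        ring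
      calc ‖J P‖ ≤ ‖J ((Polynomial.derivative)^[k] P)‖ / ‖z‖^k := ih hk'
        _ = ‖J ((Polynomial.derivative)^[k+1] P)‖ / ‖z‖^(k+1) := by
            rw [hnorm]; field_simp; ring
  -- bounding ‖J Q‖
  have hJQ : ‖J Q‖ ≤ K / ‖z‖ := by
    have step := ibp_step z hzne Q
    have hb1 : ‖((Q.eval 1 : ℝ) : ℂ) * Complex.exp z / z‖ = |Q.eval 1| / ‖z‖ := by
      rw [norm_div, norm_mul, Complex.norm_real, Real.norm_eq_abs,
        Complex.norm_exp, hzre, Real.exp_zero, mul_one]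
    have hb2 : ‖((Q.eval (-1) : ℝ) : ℂ) * Complex.exp (-z) / z‖ = |Q.eval (-1)| / ‖z‖ := by
      rw [norm_div, norm_mul, Complex.norm_real, Real.norm_eq_abs,
        Complex.norm_exp]
      have : (-z).re = 0 := by simp [hzre]
      rw [this, Real.exp_zero, mul_one]
    have htail : ‖(1/z) * J Q.derivative‖ ≤ (2*M) / ‖z‖ := by
      rw [norm_mul, norm_div, norm_one]
      rw [hJ]
      have := norm_J_le z hzre Q.derivative M hM'
      calc 1 / ‖z‖ * ‖∫ t in (-1:ℝ)..1, Complex.exp (z*t) * ((Q.derivative.eval t : ℝ) : ℂ)‖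
          ≤ 1 / ‖z‖ * (2*M) := by
            apply mul_le_mul_of_nonneg_left this (by positivity)
        _ = (2*M) / ‖z‖ := by ring
    calc ‖J Q‖ = ‖((Q.eval 1 : ℝ) : ℂ) * Complex.exp z / z - ((Q.eval (-1) : ℝ) : ℂ)
          * Complex.exp (-z) / z - (1/z) * J Q.derivative‖ := by rw [hJ]; simp only; rw [step]
      _ ≤ ‖((Q.eval 1 : ℝ) : ℂ) * Complex.exp z / z‖ + ‖((Q.eval (-1) : ℝ) : ℂ)
          * Complex.exp (-z) / z‖ + ‖(1/z) * J Q.derivative‖ := by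
            exact le_trans (norm_sub_le _ _) (add_le_add (norm_sub_le _ _) le_rfl)
      _ ≤ |Q.eval 1| / ‖z‖ + |Q.eval (-1)| / ‖z‖ + (2*M) / ‖z‖ := by
            rw [hb1, hb2]; gcongr
      _ = K / ‖z‖ := by rw [hK]; ring
  -- combine
  have hcomb : ‖J P‖ ≤ K / ‖z‖^(m+1) := by
    calc ‖J P‖ ≤ ‖J Q‖ / ‖z‖^m := chain m le_rfl
      _ ≤ (K / ‖z‖) / ‖z‖^m := div_le_div_of_nonneg_right hJQ (by positivity) 
      _ = K / ‖z‖^(m+1) := by rw [div_div, ← pow_succ']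
  rw [hLHS]
  have habs : |s|^(m+1) ≤ ‖z‖^(m+1) := by
    apply pow_le_pow_left₀ (abs_nonneg s)
    rw [hznorm]
    nlinarith [Real.pi_gt_three, abs_nonneg s]
  have hspow : (0:ℝ) < |s|^(m+1) := by positivity
  calc ‖J P‖ ≤ K / ‖z‖^(m+1) := hcomb
    _ ≤ K / |s|^(m+1) := by gcongr
    _ ≤ (K+1) / |s|^(m+1) := by gcongr; linarith


lemma inner_slice (m : ℕ) (hm : 1 ≤ m) (a : ℝ) :
    ∫ y : Fin m → ℝ, ((a - ∑ i, (y i)^2) ⊔ 0) ^ ((m:ℝ)/2)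
      = (∫ y : Fin m → ℝ, ((1 - ∑ i, (y i)^2) ⊔ 0) ^ ((m:ℝ)/2)) * (a ⊔ 0)^m := by
  have hδ : (0:ℝ) < (m:ℝ)/2 := by positivity
  rcases le_or_gt a 0 with ha | ha
  · have h1 : ∀ y : Fin m → ℝ, ((a - ∑ i, (y i)^2) ⊔ 0) ^ ((m:ℝ)/2) = 0 := by
      intro y
      have hsum : (0:ℝ) ≤ ∑ i, (y i)^2 := Finset.sum_nonneg fun i _ => sq_nonneg _
      rw [max_eq_right (by linarith), Real.zero_rpow (ne_of_gt hδ)]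
    simp only [h1, integral_zero]
    rw [max_eq_right ha, zero_pow (by omega : m ≠ 0), mul_zero]
  · have hR : (0:ℝ) < Real.sqrt a := Real.sqrt_pos.mpr ha
    have hfr : Module.finrank ℝ (Fin m → ℝ) = m := by
      rw [Module.finrank_pi]; simp
    have key := Measure.integral_comp_smul (volume : Measure (Fin m → ℝ))
      (fun y : Fin m → ℝ => ((a - ∑ i, (y i)^2) ⊔ 0) ^ ((m:ℝ)/2)) (Real.sqrt a)
    rw [hfr] at key
    -- compute f (sqrt a • y)
    have hcomp : ∀ y : Fin m → ℝ, ((a - ∑ i, ((Real.sqrt a • y) i)^2) ⊔ 0) ^ ((m:ℝ)/2)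
        = a ^ ((m:ℝ)/2) * ((1 - ∑ i, (y i)^2) ⊔ 0) ^ ((m:ℝ)/2) := by
      intro y
      have h1 : ∑ i, ((Real.sqrt a • y) i)^2 = a * ∑ i, (y i)^2 := by
        rw [Finset.mul_sum]
        congr 1; ext i
        simp only [Pi.smul_apply, smul_eq_mul, mul_pow]
        rw [Real.sq_sqrt ha.le]
      rw [h1]
      have h2 : a - a * ∑ i, (y i)^2 = a * (1 - ∑ i, (y i)^2) := by ring
      rw [h2]
      have h3 : (a * (1 - ∑ i, (y i)^2)) ⊔ 0 = a * ((1 - ∑ i, (y i)^2) ⊔ 0) := by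
        rw [max_comm, max_comm (1 - _) 0, mul_max_of_nonneg _ _ ha.le, mul_zero]
      rw [h3, Real.mul_rpow ha.le (le_max_right _ _)]
    simp only [hcomp] at key
    rw [integral_const_mul] at key
    -- key : ∫ y, orig (sqrt a • y) = |((sqrt a)^m)⁻¹| • (∫ orig)
    -- so ∫ orig = (sqrt a)^m * a^(m/2) * ∫ unit
    have habs : |((Real.sqrt a)^m)⁻¹| = ((Real.sqrt a)^m)⁻¹ := by
      rw [abs_of_pos]; positivity
    rw [habs, smul_eq_mul] at key
    have hne : ((Real.sqrt a)^m) ≠ 0 := by positivity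
    have : (∫ y : Fin m → ℝ, ((a - ∑ i, (y i)^2) ⊔ 0) ^ ((m:ℝ)/2))
        = (Real.sqrt a)^m * (a ^ ((m:ℝ)/2) * ∫ y : Fin m → ℝ, ((1 - ∑ i, (y i)^2) ⊔ 0) ^ ((m:ℝ)/2)) := by
      rw [key]
      field_simp
    rw [this, max_eq_left ha.le]
    have hsq : (Real.sqrt a)^m = a ^ ((m:ℝ)/2) := by
      rw [Real.sqrt_eq_rpow, ← Real.rpow_natCast (a ^ (1/2 : ℝ)) m, ← Real.rpow_mul ha.le]
      congr 1; ring
    rw [hsq, ← mul_assoc, ← Real.rpow_add ha]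
    have : (m:ℝ)/2 + (m:ℝ)/2 = (m:ℕ) := by push_cast; ring
    rw [this, Real.rpow_natCast]
    ring

def sliceConst (m : ℕ) : ℝ := ∫ y : Fin m → ℝ, ((1 - ∑ i, (y i)^2) ⊔ 0) ^ ((m:ℝ)/2)

-- continuity of the profile
lemma cont_profile (δ : ℝ) (hδ : 0 < δ) : Continuous fun r : ℝ => (r ⊔ 0) ^ δ := by
  have : (fun r : ℝ => (r ⊔ 0) ^ δ) = fun r : ℝ => ((r.toNNReal ^ δ : NNReal) : ℝ) := by
    ext r
    rw [NNReal.coe_rpow, Real.coe_toNNReal']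
  rw [this]
  exact NNReal.continuous_coe.comp ((NNReal.continuous_rpow_const hδ.le).comp
    continuous_real_toNNReal)

lemma integrable_prod_fn (m : ℕ) (s : ℝ) (δ : ℝ) (hδ : 0 < δ) :
    Integrable (fun p : ℝ × (Fin m → ℝ) =>
      Complex.exp ((((-(2*π*(s*p.1))) : ℝ) : ℂ) * Complex.I)
        * ((((1 - (p.1^2 + ∑ i, (p.2 i)^2)) ⊔ 0) ^ δ : ℝ) : ℂ)) volume := by
  apply Continuous.integrable_of_hasCompactSupport
  · apply Continuous.mul
    · apply Complex.continuous_exp.comp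
      apply Continuous.mul _ continuous_const
      exact Complex.continuous_ofReal.comp (by fun_prop)
    · apply Complex.continuous_ofReal.comp
      apply (cont_profile δ hδ).comp
      fun_prop
  · apply HasCompactSupport.intro (K := Set.Icc (-1:ℝ) 1 ×ˢ Metric.closedBall 0 1)
      (isCompact_Icc.prod (isCompact_closedBall _ _))
    intro p hp
    have h1 : (1:ℝ) < p.1^2 + ∑ i, (p.2 i)^2 := by
      simp only [Set.mem_prod, Set.mem_Icc, not_and_or, Metric.mem_closedBall] at hp
      have hsum : (0:ℝ) ≤ ∑ i, (p.2 i)^2 := Finset.sum_nonneg fun i _ => sq_nonneg _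
      rcases hp with h | h
      · have : 1 < |p.1| := by
          rw [lt_abs]
          push_neg at h
          rcases h with h' | h'
          · right; linarith
          · left; linarith
        nlinarith [sq_abs p.1, sq_nonneg p.1]
      · rw [dist_zero_right] at h
        push_neg at h
        have : ∃ i, 1 < |p.2 i| := by
          by_contra hc
          push_neg at hc
          have : ‖p.2‖ ≤ 1 := by
            rw [pi_norm_le_iff_of_nonneg (by norm_num)]
            intro i; rw [Real.norm_eq_abs]; exact hc i
          linarith
        obtain ⟨i, hi⟩ := this
        have h2 : 1 < (p.2 i)^2 := by nlinarith [sq_abs (p.2 i)]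
        have h3 : (p.2 i)^2 ≤ ∑ j, (p.2 j)^2 :=
          Finset.single_le_sum (f := fun j => (p.2 j)^2) (fun j _ => sq_nonneg _)
            (Finset.mem_univ i)
        nlinarith [sq_nonneg p.1]
    have : (1 - (p.1^2 + ∑ i, (p.2 i)^2)) ⊔ 0 = 0 := max_eq_right (by linarith)
    rw [this, Real.zero_rpow (ne_of_gt hδ)]
    simp

set_option maxHeartbeats 1000000 in
lemma kernel_slice (m : ℕ) (hm : 1 ≤ m) (s : ℝ) :
    brKernel (m+1) ((m:ℝ)/2) (s • EuclideanSpace.single (0 : Fin (m+1)) (1:ℝ))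
      = (sliceConst m : ℂ) * ∫ t in (-1:ℝ)..1,
          Complex.exp ((((-(2*π*(s*t))) : ℝ) : ℂ) * Complex.I) * ((((1-t^2)^m : ℝ)) : ℂ) := by
  have hδ : (0:ℝ) < (m:ℝ)/2 := by positivity
  rw [brKernel]
  change 𝓕 (fun ξ : Rn (m+1) => ((((1 - ‖ξ‖ ^ 2) ⊔ 0) ^ ((m:ℝ)/2) : ℝ) : ℂ)) (s • EuclideanSpace.single (0 : Fin (m+1)) (1:ℝ)) = _
  rw [Real.fourier_eq']
  -- rewrite the integrand on EuclideanSpace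
  have step1 : (∫ v : Rn (m+1), Complex.exp
        ((↑(-2 * π * inner ℝ v (s • EuclideanSpace.single (0 : Fin (m+1)) (1:ℝ))) : ℂ) * Complex.I)
        • ((((1 - ‖v‖ ^ 2) ⊔ 0) ^ ((m:ℝ)/2) : ℝ) : ℂ))
      = ∫ v : Rn (m+1), Complex.exp ((((-(2*π*(s * v 0))) : ℝ) : ℂ) * Complex.I)
        * ((((1 - ∑ i, (v i)^2) ⊔ 0) ^ ((m:ℝ)/2) : ℝ) : ℂ) := by
    congr 1
    ext v
    have hinner : (inner ℝ v (s • EuclideanSpace.single (0 : Fin (m+1)) (1:ℝ)) : ℝ) = s * v 0 := by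
      rw [real_inner_smul_right, EuclideanSpace.inner_single_right]
      simp
    have hnorm : ‖v‖^2 = ∑ i, (v i)^2 := by
      rw [EuclideanSpace.norm_eq, Real.sq_sqrt (Finset.sum_nonneg fun i _ => sq_nonneg _)]
      congr 1; ext i; rw [Real.norm_eq_abs, sq_abs]
    rw [hinner, hnorm, smul_eq_mul]
    norm_num
  rw [step1]
  -- move to the pi measure
  have e1 := (EuclideanSpace.volume_preserving_symm_measurableEquiv_toLp (Fin (m+1))).symm
  have step2 : (∫ v : Rn (m+1), Complex.exp ((((-(2*π*(s * v 0))) : ℝ) : ℂ) * Complex.I)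
        * ((((1 - ∑ i, (v i)^2) ⊔ 0) ^ ((m:ℝ)/2) : ℝ) : ℂ))
      = ∫ x : Fin (m+1) → ℝ, Complex.exp ((((-(2*π*(s * x 0))) : ℝ) : ℂ) * Complex.I)
        * ((((1 - ∑ i, (x i)^2) ⊔ 0) ^ ((m:ℝ)/2) : ℝ) : ℂ) := by
    rw [← MeasurePreserving.integral_comp e1
      (MeasurableEquiv.measurableEmbedding _) _]
    rfl
  rw [step2]
  -- split off the first coordinate
  have e2 := (MeasureTheory.volume_preserving_piFinSuccAbove (fun _ : Fin (m+1) => ℝ) 0).symm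
  have step3 : (∫ x : Fin (m+1) → ℝ, Complex.exp ((((-(2*π*(s * x 0))) : ℝ) : ℂ) * Complex.I)
        * ((((1 - ∑ i, (x i)^2) ⊔ 0) ^ ((m:ℝ)/2) : ℝ) : ℂ))
      = ∫ p : ℝ × (Fin m → ℝ), Complex.exp ((((-(2*π*(s * p.1))) : ℝ) : ℂ) * Complex.I)
        * ((((1 - (p.1^2 + ∑ i, (p.2 i)^2)) ⊔ 0) ^ ((m:ℝ)/2) : ℝ) : ℂ) := by
    rw [← MeasurePreserving.integral_comp e2 (MeasurableEquiv.measurableEmbedding _) _]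
    congr 1
    ext p
    simp only [MeasurableEquiv.piFinSuccAbove_symm_apply, Function.comp_apply,
      Fin.insertNthEquiv, Equiv.coe_fn_mk, Fin.insertNth_zero]
    rw [Fin.sum_univ_succ]
    simp
  rw [step3]
  -- Fubini
  rw [show (volume : Measure (ℝ × (Fin m → ℝ))) = (volume : Measure ℝ).prod volume from rfl]
  rw [MeasureTheory.integral_prod _ (by
    rw [show ((volume : Measure ℝ).prod volume : Measure (ℝ × (Fin m → ℝ))) = volume from rfl]
    exact integrable_prod_fn m s ((m:ℝ)/2) hδ)]
  -- inner integral
  have step4 : ∀ t : ℝ, (∫ y : Fin m → ℝ,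
        Complex.exp ((((-(2*π*(s * t))) : ℝ) : ℂ) * Complex.I)
        * ((((1 - (t^2 + ∑ i, (y i)^2)) ⊔ 0) ^ ((m:ℝ)/2) : ℝ) : ℂ))
      = Complex.exp ((((-(2*π*(s * t))) : ℝ) : ℂ) * Complex.I)
        * ((sliceConst m * ((1 - t^2) ⊔ 0)^m : ℝ) : ℂ) := by
    intro t
    rw [MeasureTheory.integral_const_mul]
    congr 1
    have h0 : ∀ y : Fin m → ℝ, (1 - (t^2 + ∑ i, (y i)^2)) = ((1 - t^2) - ∑ i, (y i)^2) :=
      fun y => by ring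
    calc (∫ y : Fin m → ℝ, ((((1 - (t^2 + ∑ i, (y i)^2)) ⊔ 0) ^ ((m:ℝ)/2) : ℝ) : ℂ))
        = ((∫ y : Fin m → ℝ, ((((1-t^2) - ∑ i, (y i)^2) ⊔ 0) ^ ((m:ℝ)/2) : ℝ) : ℝ) : ℂ) := by
          simp_rw [h0]; exact integral_ofReal
      _ = ((sliceConst m * ((1 - t^2) ⊔ 0)^m : ℝ) : ℂ) := by
          rw [inner_slice m hm (1 - t^2)]; norm_num [sliceConst]
  simp_rw [step4]
  -- reduce to an interval integral
  have supp : ∀ t : ℝ, t ∉ Set.Ioc (-1:ℝ) 1 →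
      Complex.exp ((((-(2*π*(s * t))) : ℝ) : ℂ) * Complex.I)
        * ((sliceConst m * ((1 - t^2) ⊔ 0)^m : ℝ) : ℂ) = 0 := by
    intro t ht
    have h1 : (1 - t^2) ≤ 0 := by
      simp only [Set.mem_Ioc, not_and_or] at ht
      push_neg at ht
      rcases ht with h | h <;> nlinarith
    rw [max_eq_right h1, zero_pow (by omega : m ≠ 0), mul_zero]
    simp
  calc (∫ x : ℝ, Complex.exp ((((-(2*π*(s * x))) : ℝ) : ℂ) * Complex.I)
        * ((sliceConst m * ((1 - x^2) ⊔ 0)^m : ℝ) : ℂ))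
      = ∫ x in Set.Ioc (-1:ℝ) 1, Complex.exp ((((-(2*π*(s * x))) : ℝ) : ℂ) * Complex.I)
        * ((sliceConst m * ((1 - x^2) ⊔ 0)^m : ℝ) : ℂ) :=
        (setIntegral_eq_integral_of_forall_compl_eq_zero supp).symm
    _ = ∫ x in (-1:ℝ)..1, Complex.exp ((((-(2*π*(s * x))) : ℝ) : ℂ) * Complex.I)
        * ((sliceConst m * ((1 - x^2) ⊔ 0)^m : ℝ) : ℂ) :=
        (intervalIntegral.integral_of_le (by norm_num)).symm
    _ = ∫ x in (-1:ℝ)..1, (sliceConst m : ℂ) *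
        (Complex.exp ((((-(2*π*(s * x))) : ℝ) : ℂ) * Complex.I) * (((1 - x^2)^m : ℝ) : ℂ)) := by
        apply intervalIntegral.integral_congr
        intro t ht
        simp only [Set.uIcc_of_le (by norm_num : (-1:ℝ) ≤ 1), Set.mem_Icc] at ht
        have h1 : (0:ℝ) ≤ 1 - t^2 := by nlinarith
        simp only [max_eq_left h1]
        push_cast
        ring
    _ = (sliceConst m : ℂ) * ∫ t in (-1:ℝ)..1,
          Complex.exp ((((-(2*π*(s*t))) : ℝ) : ℂ) * Complex.I) * ((((1-t^2)^m : ℝ)) : ℂ) :=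
        intervalIntegral.integral_const_mul _ _

lemma kernel_radial (m : ℕ) (δ : ℝ) (w : Rn (m+1)) (hw : w ≠ 0) :
    brKernel (m+1) δ w
      = brKernel (m+1) δ (‖w‖ • EuclideanSpace.single (0 : Fin (m+1)) (1:ℝ)) := by
  have hnw : ‖w‖ ≠ 0 := norm_ne_zero_iff.mpr hw
  set u : Rn (m+1) := ‖w‖⁻¹ • w with hu
  have hu1 : ‖u‖ = 1 := by
    rw [hu, norm_smul, norm_inv, norm_norm, inv_mul_cancel₀ hnw]
  -- extend {u} to an orthonormal basis
  have hcard : Module.finrank ℝ (Rn (m+1)) = Fintype.card (Fin (m+1)) := by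
    rw [finrank_euclideanSpace_fin, Fintype.card_fin]
  have horth : Orthonormal ℝ (Set.restrict {(0 : Fin (m+1))} (fun _ => u)) := by
    rw [orthonormal_iff_ite]
    intro i j
    have hij : i = j := Subsingleton.elim i j
    rw [if_pos hij]
    have : (inner ℝ u u : ℝ) = ‖u‖^2 := real_inner_self_eq_norm_sq u
    change inner ℝ u u = 1; rw [this, hu1]; norm_num
  obtain ⟨b, hb⟩ := Orthonormal.exists_orthonormalBasis_extension_of_card_eq hcard horth
  have hb0 : b 0 = u := hb 0 rfl
  set A : EuclideanSpace ℝ (Fin (m+1)) ≃ₗᵢ[ℝ] Rn (m+1) := b.repr.symm with hA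
  have hAe : A (EuclideanSpace.single (0 : Fin (m+1)) (1:ℝ)) = u := by
    rw [hA]; rw [OrthonormalBasis.repr_symm_single]; exact hb0
  have hradial : (fun ξ : Rn (m+1) => ((((1 - ‖ξ‖ ^ 2) ⊔ 0) ^ δ : ℝ) : ℂ)) ∘ A
      = fun ξ : EuclideanSpace ℝ (Fin (m+1)) => ((((1 - ‖ξ‖ ^ 2) ⊔ 0) ^ δ : ℝ) : ℂ) := by
    ext ξ
    simp [LinearIsometryEquiv.norm_map]
  have key := Real.fourier_comp_linearIsometry A
    (fun ξ : Rn (m+1) => ((((1 - ‖ξ‖ ^ 2) ⊔ 0) ^ δ : ℝ) : ℂ))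
    (‖w‖ • EuclideanSpace.single (0 : Fin (m+1)) (1:ℝ))
  rw [hradial] at key
  have hAw : A (‖w‖ • EuclideanSpace.single (0 : Fin (m+1)) (1:ℝ)) = w := by
    rw [LinearIsometryEquiv.map_smul, hAe, hu, smul_smul, mul_inv_cancel₀ hnw, one_smul]
  rw [hAw] at key
  exact key.symm

lemma profile_integrable (n : ℕ) (δ : ℝ) (hδ : 0 < δ) :
    Integrable (fun ξ : Rn n => ((((1 - ‖ξ‖ ^ 2) ⊔ 0) ^ δ : ℝ) : ℂ)) volume := by
  apply Continuous.integrable_of_hasCompactSupport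
  · apply Complex.continuous_ofReal.comp
    apply (cont_profile δ hδ).comp
    fun_prop
  · apply HasCompactSupport.intro (K := Metric.closedBall (0 : Rn n) 1)
      (isCompact_closedBall _ _)
    intro ξ hξ
    rw [Metric.mem_closedBall, dist_zero_right] at hξ
    push_neg at hξ
    have : (1 - ‖ξ‖^2) ⊔ 0 = 0 := max_eq_right (by nlinarith [norm_nonneg ξ])
    rw [this, Real.zero_rpow (ne_of_gt hδ)]
    simp

lemma kernel_bound (n : ℕ) (hn : 2 ≤ n) :
    ∃ A : ℝ, 0 < A ∧ ∀ w : Rn n, w ≠ 0 →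
      ‖brKernel n (((n:ℝ)-1)/2) w‖ ≤ A / ‖w‖^n := by
  obtain ⟨m, rfl⟩ : ∃ m, n = m + 1 := ⟨n - 1, by omega⟩
  have hm : 1 ≤ m := by omega
  have hδeq : (((m+1:ℕ):ℝ)-1)/2 = (m:ℝ)/2 := by push_cast; ring
  -- the sup bound
  set A₀ : ℝ := ∫ ξ : Rn (m+1), ‖(((((1 - ‖ξ‖ ^ 2) ⊔ 0) ^ ((m:ℝ)/2) : ℝ)) : ℂ)‖ with hA₀
  have hA₀nn : 0 ≤ A₀ := integral_nonneg fun ξ => norm_nonneg _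
  have hbdd : ∀ w : Rn (m+1), ‖brKernel (m+1) ((m:ℝ)/2) w‖ ≤ A₀ := by
    intro w
    rw [brKernel]
    exact VectorFourier.norm_fourierIntegral_le_integral_norm _ _ _ _ _
  -- the decay bound
  obtain ⟨C, hC, hdecay⟩ := oneD_decay m
  refine ⟨(|sliceConst m| + 1) * C + A₀ + 1, by positivity, ?_⟩
  intro w hw
  rw [hδeq]
  rcases le_or_gt ‖w‖ 1 with hsmall | hbig
  · have h1 : ‖w‖^(m+1) ≤ 1 := pow_le_one₀ (norm_nonneg w) hsmall
    have h2 : 0 < ‖w‖^(m+1) := by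
      have := norm_pos_iff.mpr hw
      positivity
    calc ‖brKernel (m+1) ((m:ℝ)/2) w‖ ≤ A₀ := hbdd w
      _ ≤ A₀ / ‖w‖^(m+1) := by
          rw [le_div_iff₀ h2]; nlinarith
      _ ≤ ((|sliceConst m| + 1) * C + A₀ + 1) / ‖w‖^(m+1) := by
          gcongr
          nlinarith [abs_nonneg (sliceConst m), hC.le]
  · have hs : 1 ≤ |‖w‖| := by rw [abs_of_nonneg (norm_nonneg w)]; exact hbig.le
    rw [kernel_radial m _ w hw, kernel_slice m hm ‖w‖]
    rw [norm_mul, Complex.norm_real]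
    calc ‖sliceConst m‖ * ‖∫ t in (-1:ℝ)..1,
          Complex.exp ((((-(2*π*(‖w‖*t))) : ℝ) : ℂ) * Complex.I) * ((((1-t^2)^m : ℝ)) : ℂ)‖
        ≤ |sliceConst m| * (C / |‖w‖|^(m+1)) := by
          rw [Real.norm_eq_abs]
          exact mul_le_mul_of_nonneg_left (hdecay ‖w‖ hs) (abs_nonneg _)
      _ ≤ ((|sliceConst m| + 1) * C + A₀ + 1) / ‖w‖^(m+1) := by
          rw [abs_of_nonneg (norm_nonneg w)]
          rw [mul_div_assoc']
          gcongr
          nlinarith [abs_nonneg (sliceConst m), hC.le, hA₀nn]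


lemma ennreal_shuffle (a b x c : ℝ≥0∞) (hb0 : b ≠ 0) (hbt : b ≠ ⊤) (hx0 : x ≠ 0) (hxt : x ≠ ⊤)
    (hc0 : c ≠ 0) (hct : c ≠ ⊤) : (a * b * c) * (b * x * c)⁻¹ = a * x⁻¹ := by
  rw [ENNReal.mul_inv (Or.inl (mul_ne_zero hb0 hx0)) (Or.inl (ENNReal.mul_ne_top hbt hxt)),
    ENNReal.mul_inv (Or.inl hb0) (Or.inl hbt)]
  calc (a*b*c) * (b⁻¹ * x⁻¹ * c⁻¹) = a * (b * b⁻¹) * (c * c⁻¹) * x⁻¹ := by ring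
    _ = a * 1 * 1 * x⁻¹ := by rw [ENNReal.mul_inv_cancel hb0 hbt, ENNReal.mul_inv_cancel hc0 hct]
    _ = a * x⁻¹ := by ring

lemma cover_compl (n : ℕ) (x₀ : Rn n) (r : ℝ) (hr : 0 < r) :
    (ball x₀ (2*r))ᶜ ⊆ ⋃ j : ℕ, (ball x₀ (2^(j+2)*r) \ ball x₀ (2^(j+1)*r)) := by
  intro y hy
  rw [Set.mem_compl_iff, mem_ball, not_lt] at hy
  have hex : ∃ k : ℕ, dist y x₀ < 2^(k+2)*r := by
    obtain ⟨k, hk⟩ := pow_unbounded_of_one_lt (dist y x₀ / r) (one_lt_two (α := ℝ))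
    refine ⟨k, ?_⟩
    have h1 : dist y x₀ < 2^k * r := by
      rw [div_lt_iff₀ hr] at hk; linarith
    have h2 : (2:ℝ)^k ≤ 2^(k+2) := by
      apply pow_le_pow_right₀ (by norm_num); omega
    nlinarith
  refine Set.mem_iUnion.mpr ⟨Nat.find hex, ?_⟩
  constructor
  · exact mem_ball.mpr (Nat.find_spec hex)
  · show y ∉ ball x₀ (2^(Nat.find hex + 1)*r)
    rw [mem_ball, not_lt]
    rcases Nat.eq_zero_or_pos (Nat.find hex) with h0 | hpos
    · rw [h0]; norm_num; linarith
    · obtain ⟨k, hk⟩ := Nat.exists_eq_add_of_lt hpos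
      have hmin := Nat.find_min hex (m := k) (by omega)
      push_neg at hmin
      have hkeq : k + 2 = Nat.find hex + 1 := by omega
      rwa [hkeq] at hmin

end AuxBR

/-- Pointwise estimate for the maximal Bochner–Riesz operator `T^{(n-1)/2}_*` applied to a
function vanishing on `2B`, at points of `B`: it is dominated by the sum of the averages
of `|f|` over the dilated balls `2^{j+1}B`, `j ≥ 1`. -/
theorem brMax_pointwise_estimate (n : ℕ) (hn : 2 ≤ n) :
    ∃ C : ℝ, 0 < C ∧ ∀ (x₀ : Rn n) (r : ℝ), 0 < r →
      ∀ f : Rn n → ℝ, LocallyIntegrable f volume →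
        (∀ y ∈ ball x₀ (2 * r), f y = 0) →
        ∀ x ∈ ball x₀ r,
          ENNReal.ofReal (brMax ((n - 1 : ℝ) / 2) f x) ≤
            ENNReal.ofReal C * ∑' j : ℕ,
              (volume (ball x₀ (2 ^ (j + 2) * r)))⁻¹ *
                ∫⁻ y in ball x₀ (2 ^ (j + 2) * r), ENNReal.ofReal |f y| := by
  classical
  obtain ⟨A, hA, hker⟩ := kernel_bound n hn
  haveI : Nonempty (Fin n) := ⟨⟨0, by omega⟩⟩
  set v₁ : ℝ≥0∞ := volume (ball (0 : Rn n) 1) with hv₁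
  have hv₁0 : v₁ ≠ 0 := (measure_ball_pos volume _ one_pos).ne'
  have hv₁t : v₁ ≠ ⊤ := measure_ball_lt_top.ne
  have hv₁pos : 0 < v₁.toReal := ENNReal.toReal_pos hv₁0 hv₁t
  set C : ℝ := A * 4^n * v₁.toReal with hCdef
  have hC : 0 < C := by positivity
  refine ⟨C, hC, ?_⟩
  intro x₀ r hr f hfl hf0 x hx
  set δ : ℝ := ((n:ℝ) - 1)/2 with hδ
  set RHS : ℝ≥0∞ := ENNReal.ofReal C * ∑' j : ℕ,
      (volume (ball x₀ (2 ^ (j + 2) * r)))⁻¹ *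
        ∫⁻ y in ball x₀ (2 ^ (j + 2) * r), ENNReal.ofReal |f y| with hRHS
  set S : ℕ → Set (Rn n) := fun j => ball x₀ (2^(j+2)*r) \ ball x₀ (2^(j+1)*r) with hS
  have hCsplit : ENNReal.ofReal C = ENNReal.ofReal A * ENNReal.ofReal (4^n) * v₁ := by
    rw [hCdef, ENNReal.ofReal_mul (by positivity), ENNReal.ofReal_mul hA.le,
      ENNReal.ofReal_toReal hv₁t]
  -- the key constant identity
  have hconst : ∀ j : ℕ, ENNReal.ofReal A * (ENNReal.ofReal ((2^j*r)^n))⁻¹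
      = ENNReal.ofReal C * (volume (ball x₀ (2^(j+2)*r)))⁻¹ := by
    intro j
    have hvol : volume (ball x₀ (2^(j+2)*r))
        = ENNReal.ofReal (4^n) * ENNReal.ofReal ((2^j*r)^n) * v₁ := by
      rw [Measure.addHaar_ball volume x₀ (by positivity : (0:ℝ) ≤ 2^(j+2)*r),
        finrank_euclideanSpace_fin, ← ENNReal.ofReal_mul (by positivity)]
      congr 2
      rw [← mul_pow]
      congr 1
      rw [pow_add]
      ring
    rw [hvol, hCsplit]
    exact (ennreal_shuffle (ENNReal.ofReal A) (ENNReal.ofReal (4^n))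
      (ENNReal.ofReal ((2^j*r)^n)) v₁
      (ENNReal.ofReal_pos.mpr (by positivity)).ne' ENNReal.ofReal_ne_top
      (ENNReal.ofReal_pos.mpr (by positivity)).ne' ENNReal.ofReal_ne_top
      hv₁0 hv₁t).symm
  -- main bound for each fixed R
  have hmain : ∀ R : ℝ, 0 < R → ENNReal.ofReal ‖brOp δ R f x‖ ≤ RHS := by
    intro R hR
    have claim1 : ∀ y : Rn n,
        (‖(R : ℂ) ^ n * brKernel n δ (R • (x - y)) * (f y : ℂ)‖₊ : ℝ≥0∞) ≤
          ((ball x₀ (2*r))ᶜ).indicator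
            (fun y => ENNReal.ofReal A * (ENNReal.ofReal (‖x - y‖^n))⁻¹
              * ENNReal.ofReal |f y|) y := by
      intro y
      by_cases hy : y ∈ ball x₀ (2*r)
      · rw [hf0 y hy, Set.indicator_of_notMem (by simpa using hy)]
        simp
      · rw [Set.indicator_of_mem (by simpa using hy)]
        have hdy : 2*r ≤ dist y x₀ := by rw [mem_ball, not_lt] at hy; exact hy
        have hxup : dist x₀ x < r := by rw [dist_comm]; exact mem_ball.mp hx
        have hxy : r ≤ ‖x - y‖ := by
          have h1 : dist x₀ y ≤ dist x₀ x + dist x y := dist_triangle _ _ _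
          have h3 : dist x₀ y = dist y x₀ := dist_comm _ _
          have h4 : ‖x - y‖ = dist x y := by rw [dist_eq_norm]
          linarith
        have hxypos : 0 < ‖x - y‖ := lt_of_lt_of_le hr hxy
        have hne : R • (x - y) ≠ 0 := by
          apply smul_ne_zero (ne_of_gt hR)
          rw [sub_ne_zero]
          intro h
          rw [h, sub_self] at hxypos
          simp at hxypos
        have hK := hker (R • (x - y)) hne
        have hnorm : ‖R • (x - y)‖ = R * ‖x - y‖ := by
          rw [norm_smul, Real.norm_eq_abs, abs_of_pos hR]
        rw [hnorm] at hK
        have hFnorm : ‖(R : ℂ) ^ n * brKernel n δ (R • (x - y)) * (f y : ℂ)‖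
            = R^n * ‖brKernel n δ (R • (x - y))‖ * |f y| := by
          rw [norm_mul, norm_mul, norm_pow, Complex.norm_real, Complex.norm_real,
            Real.norm_eq_abs, Real.norm_eq_abs, abs_of_pos hR]
        have hreal : ‖(R : ℂ) ^ n * brKernel n δ (R • (x - y)) * (f y : ℂ)‖
            ≤ A / ‖x - y‖^n * |f y| := by
          rw [hFnorm]
          have hc : R^n * (A / (R * ‖x - y‖)^n) = A / ‖x - y‖^n := by
            rw [mul_pow]
            field_simp
          calc R^n * ‖brKernel n δ (R • (x - y))‖ * |f y|
              ≤ R^n * (A / (R * ‖x - y‖)^n) * |f y| := by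
                apply mul_le_mul_of_nonneg_right _ (abs_nonneg _)
                exact mul_le_mul_of_nonneg_left hK (by positivity)
            _ = A / ‖x - y‖^n * |f y| := by rw [hc]
        calc (‖(R : ℂ) ^ n * brKernel n δ (R • (x - y)) * (f y : ℂ)‖₊ : ℝ≥0∞)
            = ENNReal.ofReal ‖(R : ℂ) ^ n * brKernel n δ (R • (x - y)) * (f y : ℂ)‖ :=
              (ofReal_norm _).symm
          _ ≤ ENNReal.ofReal (A / ‖x - y‖^n * |f y|) := ENNReal.ofReal_le_ofReal hreal
          _ = ENNReal.ofReal A * (ENNReal.ofReal (‖x - y‖^n))⁻¹ * ENNReal.ofReal |f y| := by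
              rw [ENNReal.ofReal_mul (div_nonneg hA.le (pow_nonneg (norm_nonneg _) n)),
                div_eq_mul_inv, ENNReal.ofReal_mul hA.le,
                ENNReal.ofReal_inv_of_pos (pow_pos hxypos n)]
    have claim2 : ∀ j : ℕ,
        (∫⁻ y in S j, ENNReal.ofReal A * (ENNReal.ofReal (‖x - y‖^n))⁻¹
            * ENNReal.ofReal |f y|)
          ≤ ENNReal.ofReal C * ((volume (ball x₀ (2 ^ (j + 2) * r)))⁻¹ *
                ∫⁻ y in ball x₀ (2 ^ (j + 2) * r), ENNReal.ofReal |f y|) := by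
      intro j
      have hSmeas : MeasurableSet (S j) := measurableSet_ball.diff measurableSet_ball
      have hcne : ENNReal.ofReal A * (ENNReal.ofReal ((2^j*r)^n))⁻¹ ≠ ⊤ :=
        ENNReal.mul_ne_top ENNReal.ofReal_ne_top
          (ENNReal.inv_ne_top.mpr (ENNReal.ofReal_pos.mpr (by positivity)).ne')
      calc (∫⁻ y in S j, ENNReal.ofReal A * (ENNReal.ofReal (‖x - y‖^n))⁻¹
              * ENNReal.ofReal |f y|)
          ≤ ∫⁻ y in S j, (ENNReal.ofReal A * (ENNReal.ofReal ((2^j*r)^n))⁻¹)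
              * ENNReal.ofReal |f y| := by
            apply lintegral_mono_ae
            apply (ae_restrict_iff' hSmeas).mpr
            apply Filter.Eventually.of_forall
            intro y hy
            have hylb : 2^(j+1)*r ≤ dist y x₀ := by
              have h := hy.2
              rw [mem_ball, not_lt] at h
              exact h
            have hxup : dist x₀ x < r := by rw [dist_comm]; exact mem_ball.mp hx
            have h2j : (1:ℝ) ≤ 2^j := one_le_pow₀ (by norm_num)
            have hxy : 2^j*r ≤ ‖x - y‖ := by
              have h1 : dist x₀ y ≤ dist x₀ x + dist x y := dist_triangle _ _ _
              have h3 : dist x₀ y = dist y x₀ := dist_comm _ _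
              have h4 : ‖x - y‖ = dist x y := by rw [dist_eq_norm]
              have h5 : (2:ℝ)^(j+1) = 2 * 2^j := by ring
              nlinarith
            have hle : ENNReal.ofReal ((2^j*r)^n) ≤ ENNReal.ofReal (‖x - y‖^n) := by
              apply ENNReal.ofReal_le_ofReal
              exact pow_le_pow_left₀ (by positivity) hxy n
            gcongr
          _ = (ENNReal.ofReal A * (ENNReal.ofReal ((2^j*r)^n))⁻¹)
              * ∫⁻ y in S j, ENNReal.ofReal |f y| :=
            lintegral_const_mul' _ _ hcne
          _ ≤ (ENNReal.ofReal A * (ENNReal.ofReal ((2^j*r)^n))⁻¹)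
              * ∫⁻ y in ball x₀ (2 ^ (j + 2) * r), ENNReal.ofReal |f y| :=
            mul_le_mul_right (lintegral_mono_set Set.diff_subset) _
          _ = ENNReal.ofReal C * ((volume (ball x₀ (2 ^ (j + 2) * r)))⁻¹ *
                ∫⁻ y in ball x₀ (2 ^ (j + 2) * r), ENNReal.ofReal |f y|) := by
            rw [hconst j, mul_assoc]
    calc ENNReal.ofReal ‖brOp δ R f x‖
        = (‖∫ y : Rn n, (R : ℂ) ^ n * brKernel n δ (R • (x - y)) * (f y : ℂ)‖₊ : ℝ≥0∞) := by
          rw [brOp]; exact ofReal_norm _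
      _ ≤ ∫⁻ y : Rn n, ‖(R : ℂ) ^ n * brKernel n δ (R • (x - y)) * (f y : ℂ)‖₊ :=
          enorm_integral_le_lintegral_enorm _
      _ ≤ ∫⁻ y : Rn n, ((ball x₀ (2*r))ᶜ).indicator
            (fun y => ENNReal.ofReal A * (ENNReal.ofReal (‖x - y‖^n))⁻¹
              * ENNReal.ofReal |f y|) y := lintegral_mono claim1
      _ = ∫⁻ y in (ball x₀ (2*r))ᶜ, ENNReal.ofReal A * (ENNReal.ofReal (‖x - y‖^n))⁻¹
              * ENNReal.ofReal |f y| := lintegral_indicator measurableSet_ball.compl _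
      _ ≤ ∫⁻ y in ⋃ j : ℕ, S j, ENNReal.ofReal A * (ENNReal.ofReal (‖x - y‖^n))⁻¹
              * ENNReal.ofReal |f y| := lintegral_mono_set (cover_compl n x₀ r hr)
      _ ≤ ∑' j : ℕ, ∫⁻ y in S j, ENNReal.ofReal A * (ENNReal.ofReal (‖x - y‖^n))⁻¹
              * ENNReal.ofReal |f y| := lintegral_iUnion_le _ _
      _ ≤ ∑' j : ℕ, ENNReal.ofReal C * ((volume (ball x₀ (2 ^ (j + 2) * r)))⁻¹ *
                ∫⁻ y in ball x₀ (2 ^ (j + 2) * r), ENNReal.ofReal |f y|) :=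
          ENNReal.tsum_le_tsum claim2
      _ = RHS := ENNReal.tsum_mul_left
  -- pass to the supremum
  show ENNReal.ofReal (brMax δ f x) ≤ RHS
  by_cases hT : RHS = ⊤
  · rw [hT]; exact le_top
  · have h1 : ∀ R : ℝ, 0 < R → ‖brOp δ R f x‖ ≤ RHS.toReal := by
      intro R hR'
      have h := hmain R hR'
      rw [← ENNReal.ofReal_toReal hT] at h
      exact (ENNReal.ofReal_le_ofReal_iff ENNReal.toReal_nonneg).mp h
    have h2 : brMax δ f x ≤ RHS.toReal := by
      apply Real.iSup_le _ ENNReal.toReal_nonneg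
      intro R
      exact Real.iSup_le (fun hR' => h1 R hR') ENNReal.toReal_nonneg
    calc ENNReal.ofReal (brMax δ f x) ≤ ENNReal.ofReal RHS.toReal :=
        ENNReal.ofReal_le_ofReal h2
      _ = RHS := ENNReal.ofReal_toReal hT
end
end
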